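/- Let H be a Hopf algebra over a field k with antipode S, C a right H-comodule coalgebra, δ : H → k a character and σ ∈ H a group-like element. If (δ,σ) is a modular pair (δ(σ)=1) which is H^C-in involution, i.e. c₍₀₎ ⊗ S_δ²(c₍₁₎) = c₍₀₎ ⊗ σc₍₁₎σ⁻¹ for all c ∈ C, then the one-dimensional module-comodule ^σk_δ is an H^C-SAYD module. -/

import Mathlib

open TensorProduct LinearMap

noncomputable section
namespace HCN

variable (k : Type) [Field k]

section Shortcuts
variable (X Y Z W : Type) [AddCommGroup X] [Module k X] [AddCommGroup Y] [Module k Y]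
  [AddCommGroup Z] [Module k Z] [AddCommGroup W] [Module k W]
abbrev cmm : X ⊗[k] Y →ₗ[k] Y ⊗[k] X := (TensorProduct.comm k X Y).toLinearMap
abbrev asc : (X ⊗[k] Y) ⊗[k] Z →ₗ[k] X ⊗[k] (Y ⊗[k] Z) := (TensorProduct.assoc k X Y Z).toLinearMap
abbrev ascs : X ⊗[k] (Y ⊗[k] Z) →ₗ[k] (X ⊗[k] Y) ⊗[k] Z := (TensorProduct.assoc k X Y Z).symm.toLinearMap
abbrev mid4 : (X ⊗[k] Y) ⊗[k] (Z ⊗[k] W) →ₗ[k] (X ⊗[k] Z) ⊗[k] (Y ⊗[k] W) :=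
  (TensorProduct.tensorTensorTensorComm k X Y Z W).toLinearMap
end Shortcuts

section Mul
variable (H : Type) [AddCommGroup H] [Module k H]
def opMul (μ : H ⊗[k] H →ₗ[k] H) : H ⊗[k] H →ₗ[k] H := μ ∘ₗ cmm k H H
def lmulBy (μ : H ⊗[k] H →ₗ[k] H) (h : H) : H →ₗ[k] H := μ ∘ₗ TensorProduct.mk k H H h
def rmulBy (μ : H ⊗[k] H →ₗ[k] H) (h : H) : H →ₗ[k] H := μ ∘ₗ (TensorProduct.mk k H H).flip h
variable {H}
variable {V W : Type} [AddCommGroup V] [Module k V] [AddCommGroup W] [Module k W]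
def diagL (μ : H ⊗[k] H →ₗ[k] H) (ρV : V →ₗ[k] H ⊗[k] V) (ρW : W →ₗ[k] H ⊗[k] W) :
    (V ⊗[k] W) →ₗ[k] H ⊗[k] (V ⊗[k] W) :=
  (μ.rTensor (V ⊗[k] W)) ∘ₗ mid4 k H V H W ∘ₗ (TensorProduct.map ρV ρW)
def diagR (μ : H ⊗[k] H →ₗ[k] H) (ρV : V →ₗ[k] V ⊗[k] H) (ρW : W →ₗ[k] W ⊗[k] H) :
    (V ⊗[k] W) →ₗ[k] (V ⊗[k] W) ⊗[k] H :=
  (μ.lTensor (V ⊗[k] W)) ∘ₗ mid4 k V H W H ∘ₗ (TensorProduct.map ρV ρW)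
end Mul

section TpowSec
variable (A : Type) [AddCommGroup A] [Module k A]
def Tpow : ℕ → ModuleCat k
  | 0 => ModuleCat.of k k
  | n+1 => ModuleCat.of k (A ⊗[k] (Tpow n : Type))

/-- the linear equivalence extracting the *last* tensor factor of `Tpow k A (n+1)`. -/
def epow : ∀ n : ℕ, (Tpow k A (n+1) : Type) ≃ₗ[k] (Tpow k A n : Type) ⊗[k] A
  | 0 => TensorProduct.comm k A k
  | n+1 => (LinearEquiv.lTensor A (epow n)).trans
      (TensorProduct.assoc k A (Tpow k A n : Type) A).symm
end TpowSec

section TrivCoact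
variable (H : Type) [Ring H] [Algebra k H]
variable (M : Type) [AddCommGroup M] [Module k M]
/-- the trivial left coaction `m ↦ 1 ⊗ m`. -/
def trivL : M →ₗ[k] H ⊗[k] M := TensorProduct.mk k H M 1
/-- the trivial right coaction `m ↦ m ⊗ 1`. -/
def trivR : M →ₗ[k] M ⊗[k] H := (TensorProduct.mk k M H).flip 1
/-- the trivial right action `m ⊗ h ↦ ε(h) m` associated to a counit map `ε`. -/
def trivAct (ε : H →ₗ[k] k) : M ⊗[k] H →ₗ[k] M :=
  (TensorProduct.rid k M).toLinearMap ∘ₗ (ε.lTensor M)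
end TrivCoact

section TpowCoact
variable {H : Type} [Ring H] [Algebra k H]
variable {A : Type} [AddCommGroup A] [Module k A]

/-- the diagonal left coaction on `Tpow k A n` induced by a left coaction on `A`
(with respect to a multiplication map `μ` on `H`). -/
def TpowρL (μ : H ⊗[k] H →ₗ[k] H) (ρA : A →ₗ[k] H ⊗[k] A) :
    ∀ n : ℕ, (Tpow k A n : Type) →ₗ[k] H ⊗[k] (Tpow k A n : Type)
  | 0 => trivL k H k
  | n+1 => diagL k μ ρA (TpowρL μ ρA n)

/-- the diagonal right coaction on `Tpow k A n` induced by a right coaction on `A`. -/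
def TpowρR (μ : H ⊗[k] H →ₗ[k] H) (ρA : A →ₗ[k] A ⊗[k] H) :
    ∀ n : ℕ, (Tpow k A n : Type) →ₗ[k] (Tpow k A n : Type) ⊗[k] H
  | 0 => trivR k H k
  | n+1 => diagR k μ ρA (TpowρR μ ρA n)

end TpowCoact

section TwistSec
variable {H M : Type} [AddCommGroup H] [Module k H] [AddCommGroup M] [Module k M]

/-- the anti-Yetter--Drinfeld twist map
`h ⊗ (g ⊗ m) ↦ S(h⁽³⁾) g h⁽¹⁾ ⊗ m · h⁽²⁾`, expressed diagrammatically in terms of a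
multiplication `μ`, a comultiplication `Δ` and an antipode `S` of `H` and a right action
`act` of `H` on `M`. -/
def Twist (μ : H ⊗[k] H →ₗ[k] H) (Δ : H →ₗ[k] H ⊗[k] H) (S : H →ₗ[k] H)
    (act : M ⊗[k] H →ₗ[k] M) : H ⊗[k] (H ⊗[k] M) →ₗ[k] H ⊗[k] M :=
  letI Δ₂ : H →ₗ[k] H ⊗[k] (H ⊗[k] H) := (Δ.lTensor H) ∘ₗ Δ
  letI actc : H ⊗[k] M →ₗ[k] M := act ∘ₗ cmm k H M
  letI sm : H ⊗[k] H →ₗ[k] H := opMul k H μ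
  letI u : (H ⊗[k] H) ⊗[k] M →ₗ[k] H ⊗[k] M :=
    (S.rTensor M) ∘ₗ (actc.lTensor H) ∘ₗ asc k H H M ∘ₗ ((cmm k H H).rTensor M)
  (sm.rTensor M) ∘ₗ ascs k H H M ∘ₗ (u.lTensor H) ∘ₗ
    (sm.rTensor ((H ⊗[k] H) ⊗[k] M)) ∘ₗ mid4 k H (H ⊗[k] H) H M ∘ₗ (Δ₂.rTensor (H ⊗[k] M))

/-- the right-coaction version of the anti-Yetter--Drinfeld twist map:
`(m ⊗ g) ⊗ h ↦ m · h⁽²⁾ ⊗ S(h⁽³⁾) g h⁽¹⁾`. -/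
def TwistR (μ : H ⊗[k] H →ₗ[k] H) (Δ : H →ₗ[k] H ⊗[k] H) (S : H →ₗ[k] H)
    (act : M ⊗[k] H →ₗ[k] M) : (M ⊗[k] H) ⊗[k] H →ₗ[k] M ⊗[k] H :=
  cmm k H M ∘ₗ Twist k μ Δ S act ∘ₗ ((cmm k M H).lTensor H) ∘ₗ cmm k (M ⊗[k] H) H

end TwistSec

section ComodLaws
variable {H : Type} [Ring H] [Bialgebra k H]
variable {V : Type} [AddCommGroup V] [Module k V]

/-- coassociativity of a left `H`-coaction. -/
def IsCoassocL (ρ : V →ₗ[k] H ⊗[k] V) : Prop :=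
  ρ.lTensor H ∘ₗ ρ = asc k H H V ∘ₗ ((Coalgebra.comul (R := k) (A := H)).rTensor V) ∘ₗ ρ

/-- counitality of a left `H`-coaction. -/
def IsCounitalL (ρ : V →ₗ[k] H ⊗[k] V) : Prop :=
  (TensorProduct.lid k V).toLinearMap ∘ₗ ((Coalgebra.counit (R := k) (A := H)).rTensor V) ∘ₗ ρ
    = LinearMap.id

/-- coassociativity of a right `H`-coaction. -/
def IsCoassocR (ρ : V →ₗ[k] V ⊗[k] H) : Prop :=
  ρ.rTensor H ∘ₗ ρ = ascs k V H H ∘ₗ ((Coalgebra.comul (R := k) (A := H)).lTensor V) ∘ₗ ρ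

/-- counitality of a right `H`-coaction. -/
def IsCounitalR (ρ : V →ₗ[k] V ⊗[k] H) : Prop :=
  (TensorProduct.rid k V).toLinearMap ∘ₗ ((Coalgebra.counit (R := k) (A := H)).lTensor V) ∘ₗ ρ
    = LinearMap.id

end ComodLaws

section ComodAlg
variable {H : Type} [Ring H] [Bialgebra k H]

/-- `A` is a left `H`-comodule algebra via the coaction `ρ`:  `ρ` is a counital coassociative
coaction which is moreover a morphism of unital algebras. -/
def IsComodAlgL {A : Type} [Ring A] [Algebra k A] (ρ : A →ₗ[k] H ⊗[k] A) : Prop :=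
  IsCoassocL k ρ ∧ IsCounitalL k ρ ∧ ρ 1 = 1 ∧ ∀ a b : A, ρ (a * b) = ρ a * ρ b

/-- `A` is a right `H`-comodule algebra via the coaction `ρ`. -/
def IsComodAlgR {A : Type} [Ring A] [Algebra k A] (ρ : A →ₗ[k] A ⊗[k] H) : Prop :=
  IsCoassocR k ρ ∧ IsCounitalR k ρ ∧ ρ 1 = 1 ∧ ∀ a b : A, ρ (a * b) = ρ a * ρ b

/-- `C` is a right `H`-comodule coalgebra via the coaction `ρ`:  `ρ` is a counital
coassociative coaction which is moreover a morphism of coalgebras, i.e.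
`c₍₀₎⁽¹⁾ ⊗ c₍₀₎⁽²⁾ ⊗ c₍₁₎ = c⁽¹⁾₍₀₎ ⊗ c⁽²⁾₍₀₎ ⊗ c⁽¹⁾₍₁₎c⁽²⁾₍₁₎` and `ε(c₍₀₎)c₍₁₎ = ε(c)1`. -/
def IsComodCoalgR {C : Type} [AddCommGroup C] [Module k C] [Coalgebra k C]
    (ρ : C →ₗ[k] C ⊗[k] H) : Prop :=
  IsCoassocR k ρ ∧ IsCounitalR k ρ
  ∧ ((Coalgebra.comul (R := k) (A := C)).rTensor H) ∘ₗ ρ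
      = ((LinearMap.mul' k H).lTensor (C ⊗[k] C)) ∘ₗ mid4 k C H C H
          ∘ₗ (TensorProduct.map ρ ρ) ∘ₗ (Coalgebra.comul (R := k) (A := C))
  ∧ (TensorProduct.lid k H).toLinearMap ∘ₗ ((Coalgebra.counit (R := k) (A := C)).rTensor H) ∘ₗ ρ
      = (Algebra.linearMap k H) ∘ₗ (Coalgebra.counit (R := k) (A := C))

end ComodAlg

section Actions
variable {H : Type} [Ring H] [Algebra k H]
variable {M : Type} [AddCommGroup M] [Module k M]

/-- `act` is a unital associative right action of the algebra `H` on `M`. -/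
def IsRAct (act : M ⊗[k] H →ₗ[k] M) : Prop :=
  (∀ m : M, act (m ⊗ₜ[k] 1) = m) ∧
    ∀ (m : M) (g h : H), act (act (m ⊗ₜ[k] g) ⊗ₜ[k] h) = act (m ⊗ₜ[k] (g * h))

/-- `act` is a unital associative right action of `(H, μ, e)` on `M` where the
multiplication `μ` and unit `e` are given explicitly. -/
def IsRActμ (μ : H ⊗[k] H →ₗ[k] H) (e : H) (act : M ⊗[k] H →ₗ[k] M) : Prop :=
  (∀ m : M, act (m ⊗ₜ[k] e) = m) ∧
    ∀ (m : M) (g h : H), act (act (m ⊗ₜ[k] g) ⊗ₜ[k] h) = act (m ⊗ₜ[k] μ (g ⊗ₜ[k] h))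

end Actions

section ModAlg
variable {H : Type} [Ring H] [Bialgebra k H]

/-- `β` is a left action of the bialgebra `H` on `A` making `A` a left `H`-module algebra. -/
def IsModuleAlgL {A : Type} [Ring A] [Algebra k A]
    (β : H ⊗[k] A →ₗ[k] A) : Prop :=
  (∀ a : A, β (1 ⊗ₜ[k] a) = a)
  ∧ (∀ (g h : H) (a : A), β (g ⊗ₜ[k] β (h ⊗ₜ[k] a)) = β ((g * h) ⊗ₜ[k] a))
  ∧ (β ∘ₗ ((LinearMap.mul' k A).lTensor H)
      = (LinearMap.mul' k A) ∘ₗ (TensorProduct.map β β) ∘ₗ mid4 k H H A A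
          ∘ₗ ((Coalgebra.comul (R := k) (A := H)).rTensor (A ⊗[k] A)))
  ∧ (∀ h : H, β (h ⊗ₜ[k] (1 : A)) = (Coalgebra.counit (R := k) (A := H) h) • (1 : A))

end ModAlg

section LeftSAYD
variable {H : Type} [Ring H] [HopfAlgebra k H]
variable {A M : Type} [AddCommGroup A] [Module k A] [AddCommGroup M] [Module k M]

/-- colinearity of `φ : V → M` with respect to left `H`-coactions. -/
def IsColinL {V : Type} [AddCommGroup V] [Module k V]
    (ρV : V →ₗ[k] H ⊗[k] V) (ρM : M →ₗ[k] H ⊗[k] M) (φ : V →ₗ[k] M) : Prop :=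
  ρM ∘ₗ φ = φ.lTensor H ∘ₗ ρV

/-- the `^A H`-anti-Yetter--Drinfeld condition for a colinear map `φ : A ⊗ W → M`:
`(φ(a₍₀₎ ⊗ w) · a₍₋₁₎)₍₋₁₎ ⊗ (φ(a₍₀₎ ⊗ w) · a₍₋₁₎)₍₀₎
  = S(a₍₋₁₎⁽³⁾) φ(a₍₀₎ ⊗ w)₍₋₁₎ a₍₋₁₎⁽¹⁾ ⊗ φ(a₍₀₎ ⊗ w)₍₀₎ · a₍₋₁₎⁽²⁾`. -/
def AYDcondL {W : Type} [AddCommGroup W] [Module k W]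
    (ρA : A →ₗ[k] H ⊗[k] A) (ρM : M →ₗ[k] H ⊗[k] M) (act : M ⊗[k] H →ₗ[k] M)
    (φ : (A ⊗[k] W) →ₗ[k] M) : Prop :=
  ρM ∘ₗ act ∘ₗ cmm k H M ∘ₗ (φ.lTensor H) ∘ₗ asc k H A W ∘ₗ (ρA.rTensor W)
  = Twist k (LinearMap.mul' k H) (Coalgebra.comul (R := k)) (HopfAlgebra.antipode (R := k)) act
      ∘ₗ ((ρM ∘ₗ φ).lTensor H) ∘ₗ asc k H A W ∘ₗ (ρA.rTensor W)

/-- the stability condition for a map `φ : V → M`:  `φ(v₍₀₎) · v₍₋₁₎ = φ(v)`. -/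
def StabCondL {V : Type} [AddCommGroup V] [Module k V]
    (ρV : V →ₗ[k] H ⊗[k] V) (act : M ⊗[k] H →ₗ[k] M) (φ : V →ₗ[k] M) : Prop :=
  act ∘ₗ cmm k H M ∘ₗ (φ.lTensor H) ∘ₗ ρV = φ

/-- `M` (a module and comodule over `H`) is an `^A H`-SAYD module for the left `H`-comodule
(algebra) `A`:  every `H`-colinear map `φ : A^{⊗(n+1)} → M` (with respect to the diagonal
coaction) satisfies the `^A H`-AYD and stability conditions. -/
def IsAHSAYDL (ρA : A →ₗ[k] H ⊗[k] A) (ρM : M →ₗ[k] H ⊗[k] M)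
    (act : M ⊗[k] H →ₗ[k] M) : Prop :=
  ∀ n : ℕ, ∀ φ : (A ⊗[k] (Tpow k A n : Type)) →ₗ[k] M,
    IsColinL k (TpowρL k (LinearMap.mul' k H) ρA (n + 1)) ρM φ →
      AYDcondL k ρA ρM act φ ∧ StabCondL k (TpowρL k (LinearMap.mul' k H) ρA (n + 1)) act φ

/-- the left-coaction rotation map on `Tpow k A (n+1)`:
`a₀ ⊗ ⋯ ⊗ aₙ ↦ aₙ₍₋₁₎ ⊗ (aₙ₍₀₎ ⊗ a₀ ⊗ ⋯ ⊗ aₙ₋₁)`. -/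
def rotρL (ρA : A →ₗ[k] H ⊗[k] A) (n : ℕ) :
    (Tpow k A (n+1) : Type) →ₗ[k] H ⊗[k] (Tpow k A (n+1) : Type) :=
  asc k H A (Tpow k A n : Type) ∘ₗ cmm k (Tpow k A n : Type) (H ⊗[k] A)
    ∘ₗ (ρA.lTensor (Tpow k A n : Type)) ∘ₗ (epow k A n).toLinearMap

/-- the cyclic operator `τₙ` on `Hom(A^{⊗(n+1)}, M)`:
`(τₙ f)(a₀ ⊗ ⋯ ⊗ aₙ) = f(aₙ₍₀₎ ⊗ a₀ ⊗ ⋯ ⊗ aₙ₋₁) · aₙ₍₋₁₎`. -/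
def tauL (ρA : A →ₗ[k] H ⊗[k] A) (act : M ⊗[k] H →ₗ[k] M) (n : ℕ)
    (φ : (Tpow k A (n+1) : Type) →ₗ[k] M) : (Tpow k A (n+1) : Type) →ₗ[k] M :=
  act ∘ₗ cmm k H M ∘ₗ (φ.lTensor H) ∘ₗ rotρL k ρA n

/-- `M` is an `^A H`-HCC (Hopf cyclic coefficients) for the left `H`-comodule algebra `A`:
the cyclic operator `τₙ` is well defined on the `H`-colinear maps `A^{⊗(n+1)} → M`
(so the whole cocyclic structure is well defined) and satisfies `τₙ^{n+1} = id`, making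
`Hom^H(A^{⊗(n+1)}, M)` a cocyclic module. -/
def IsAHHCCL (ρA : A →ₗ[k] H ⊗[k] A) (ρM : M →ₗ[k] H ⊗[k] M)
    (act : M ⊗[k] H →ₗ[k] M) : Prop :=
  ∀ n : ℕ, ∀ φ : (Tpow k A (n+1) : Type) →ₗ[k] M,
    IsColinL k (TpowρL k (LinearMap.mul' k H) ρA (n + 1)) ρM φ →
      IsColinL k (TpowρL k (LinearMap.mul' k H) ρA (n + 1)) ρM (tauL k ρA act n φ)
      ∧ (tauL k ρA act n)^[n+1] φ = φ

/-- `M` is a (right-left) stable anti-Yetter--Drinfeld module over `H`: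
`(m·h)₍₋₁₎ ⊗ (m·h)₍₀₎ = S(h⁽³⁾) m₍₋₁₎ h⁽¹⁾ ⊗ m₍₀₎ · h⁽²⁾` and `m₍₀₎ · m₍₋₁₎ = m`. -/
def IsSAYD (ρM : M →ₗ[k] H ⊗[k] M) (act : M ⊗[k] H →ₗ[k] M) : Prop :=
  (ρM ∘ₗ act
    = Twist k (LinearMap.mul' k H) (Coalgebra.comul (R := k)) (HopfAlgebra.antipode (R := k)) act
        ∘ₗ (ρM.lTensor H) ∘ₗ cmm k M H)
  ∧ act ∘ₗ cmm k H M ∘ₗ ρM = LinearMap.id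

end LeftSAYD
section Characters
variable {H : Type} [Ring H] [HopfAlgebra k H]

/-- `σ` is a group-like element of `H`. -/
def IsGrouplike (σ : H) : Prop :=
  Coalgebra.comul (R := k) σ = σ ⊗ₜ[k] σ ∧ Coalgebra.counit (R := k) σ = 1

/-- the `δ`-twisted antipode `S_δ(h) = δ(h⁽¹⁾) S(h⁽²⁾)` of a character `δ : H → k`. -/
def Sdelta (δ : H →ₐ[k] k) : H →ₗ[k] H :=
  (TensorProduct.lid k H).toLinearMap
    ∘ₗ (TensorProduct.map δ.toLinearMap (HopfAlgebra.antipode (R := k)))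
    ∘ₗ (Coalgebra.comul (R := k))

/-- the right action of `H` on `k` through a character `δ` : `x · h = δ(h) x`. -/
def actChar (δ : H →ₐ[k] k) : k ⊗[k] H →ₗ[k] k :=
  (TensorProduct.lid k k).toLinearMap ∘ₗ (δ.toLinearMap.lTensor k)

/-- the left coaction of `H` on `k` given by a (group-like) element `σ` : `x ↦ σ ⊗ x`. -/
def coactGrouplike (σ : H) : k →ₗ[k] H ⊗[k] k := TensorProduct.mk k H k σ

end Characters

section RightSAYD
/- The right-coaction versions, with the Hopf structure maps `μ`, `Δ`, `S` given explicitly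
(so that they can be applied to the bicrossed product Hopf algebra structure on `F ⊗ U`). -/
variable {H : Type} [Ring H] [Algebra k H]
variable {A M : Type} [AddCommGroup A] [Module k A] [AddCommGroup M] [Module k M]

/-- colinearity of `φ : V → M` with respect to right `H`-coactions. -/
def IsColinR {V : Type} [AddCommGroup V] [Module k V]
    (ρV : V →ₗ[k] V ⊗[k] H) (ρM : M →ₗ[k] M ⊗[k] H) (φ : V →ₗ[k] M) : Prop :=
  ρM ∘ₗ φ = φ.rTensor H ∘ₗ ρV

/-- the canonical map `A ⊗ W → (A ⊗ W) ⊗ H`, `a ⊗ w ↦ (a₍₀₎ ⊗ w) ⊗ a₍₁₎`,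
coacting on the first tensor factor only. -/
def coactFirstR {W : Type} [AddCommGroup W] [Module k W] (ρA : A →ₗ[k] A ⊗[k] H) :
    (A ⊗[k] W) →ₗ[k] (A ⊗[k] W) ⊗[k] H :=
  ascs k A W H ∘ₗ ((cmm k H W).lTensor A) ∘ₗ asc k A H W ∘ₗ (ρA.rTensor W)

/-- the right-coaction version of the `^A H`-anti-Yetter--Drinfeld condition for a
colinear map `φ : A ⊗ W → M`. -/
def AYDcondR {W : Type} [AddCommGroup W] [Module k W]
    (μ : H ⊗[k] H →ₗ[k] H) (Δ : H →ₗ[k] H ⊗[k] H) (S : H →ₗ[k] H)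
    (ρA : A →ₗ[k] A ⊗[k] H) (ρM : M →ₗ[k] M ⊗[k] H) (act : M ⊗[k] H →ₗ[k] M)
    (φ : (A ⊗[k] W) →ₗ[k] M) : Prop :=
  ρM ∘ₗ act ∘ₗ (φ.rTensor H) ∘ₗ coactFirstR k ρA
  = TwistR k μ Δ S act ∘ₗ ((ρM ∘ₗ φ).rTensor H) ∘ₗ coactFirstR k ρA

/-- the right-coaction stability condition : `φ(v₍₀₎) · v₍₁₎ = φ(v)`. -/
def StabCondR {V : Type} [AddCommGroup V] [Module k V]
    (ρV : V →ₗ[k] V ⊗[k] H) (act : M ⊗[k] H →ₗ[k] M) (φ : V →ₗ[k] M) : Prop :=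
  act ∘ₗ (φ.rTensor H) ∘ₗ ρV = φ

/-- `M` is an `^A H`-SAYD module for a *right* `H`-comodule (algebra) `A`, where the Hopf
structure maps `μ`, `Δ`, `S` of `H` are given explicitly. -/
def IsAHSAYDR (μ : H ⊗[k] H →ₗ[k] H) (Δ : H →ₗ[k] H ⊗[k] H) (S : H →ₗ[k] H)
    (ρA : A →ₗ[k] A ⊗[k] H) (ρM : M →ₗ[k] M ⊗[k] H) (act : M ⊗[k] H →ₗ[k] M) : Prop :=
  ∀ n : ℕ, ∀ φ : (A ⊗[k] (Tpow k A n : Type)) →ₗ[k] M,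
    IsColinR k (TpowρR k μ ρA (n + 1)) ρM φ →
      AYDcondR k μ Δ S ρA ρM act φ ∧ StabCondR k (TpowρR k μ ρA (n + 1)) act φ

end RightSAYD
section CotensorSide
variable {H : Type} [Ring H] [HopfAlgebra k H]
variable {C M : Type} [AddCommGroup C] [Module k C] [AddCommGroup M] [Module k M]

/-- the cotensor defect map `V ⊗ M → V ⊗ (H ⊗ M)`, whose kernel is the cotensor product
`V □_H M` of a right `H`-comodule `V` and a left `H`-comodule `M`. -/
def cotensorDefect {V : Type} [AddCommGroup V] [Module k V]
    (ρV : V →ₗ[k] V ⊗[k] H) (ρM : M →ₗ[k] H ⊗[k] M) :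
    V ⊗[k] M →ₗ[k] V ⊗[k] (H ⊗[k] M) :=
  asc k V H M ∘ₗ (ρV.rTensor M) - (ρM.lTensor V)

/-- the map `v ⊗ m ↦ v₍₀₎ ⊗ m · v₍₁₎`. -/
def stabMapC {V : Type} [AddCommGroup V] [Module k V]
    (ρV : V →ₗ[k] V ⊗[k] H) (act : M ⊗[k] H →ₗ[k] M) : V ⊗[k] M →ₗ[k] V ⊗[k] M :=
  ((act ∘ₗ cmm k H M).lTensor V) ∘ₗ asc k V H M ∘ₗ (ρV.rTensor M)

/-- the `H^C`-anti-Yetter--Drinfeld condition: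
`c₍₀₎ ⊗ (m·c₍₁₎)₍₋₁₎ ⊗ (m·c₍₁₎)₍₀₎ = c₍₀₎ ⊗ S(c₍₁₎⁽³⁾) m₍₋₁₎ c₍₁₎⁽¹⁾ ⊗ m₍₀₎ · c₍₁₎⁽²⁾`. -/
def AYDcondC (ρC : C →ₗ[k] C ⊗[k] H) (ρM : M →ₗ[k] H ⊗[k] M)
    (act : M ⊗[k] H →ₗ[k] M) : Prop :=
  ((ρM ∘ₗ act ∘ₗ cmm k H M).lTensor C) ∘ₗ asc k C H M ∘ₗ (ρC.rTensor M)
  = ((Twist k (LinearMap.mul' k H) (Coalgebra.comul (R := k))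
        (HopfAlgebra.antipode (R := k)) act ∘ₗ (ρM.lTensor H)).lTensor C)
      ∘ₗ asc k C H M ∘ₗ (ρC.rTensor M)

/-- `M` is an `H^C`-SAYD module for the right `H`-comodule (coalgebra) `C` :
the `H^C`-AYD condition holds, and the stability condition
`d̃₍₀₎ ⊗ m · d̃₍₁₎ = d̃ ⊗ m` holds on the cotensor product `C^{⊗(n+1)} □_H M`. -/
def IsHCSAYD (ρC : C →ₗ[k] C ⊗[k] H) (ρM : M →ₗ[k] H ⊗[k] M)
    (act : M ⊗[k] H →ₗ[k] M) : Prop :=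
  AYDcondC k ρC ρM act
  ∧ ∀ n : ℕ, ∀ x ∈ LinearMap.ker
      (cotensorDefect k (TpowρR k (LinearMap.mul' k H) ρC (n + 1)) ρM),
      stabMapC k (TpowρR k (LinearMap.mul' k H) ρC (n + 1)) act x = x

/-- the cyclic operator `τₙ` on `C^{⊗(n+1)} ⊗ M`:
`c₀ ⊗ ⋯ ⊗ cₙ ⊗ m ↦ c₁ ⊗ ⋯ ⊗ cₙ ⊗ c₀₍₀₎ ⊗ m · c₀₍₁₎`. -/
def tauC (ρC : C →ₗ[k] C ⊗[k] H) (act : M ⊗[k] H →ₗ[k] M) (n : ℕ) :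
    ((Tpow k C (n+1) : Type) ⊗[k] M) →ₗ[k] ((Tpow k C (n+1) : Type) ⊗[k] M) :=
  letI W : Type := (Tpow k C n : Type)
  (((epow k C n).symm.toLinearMap).rTensor M)
    ∘ₗ ((act ∘ₗ cmm k H M).lTensor (W ⊗[k] C))
    ∘ₗ asc k (W ⊗[k] C) H M
    ∘ₗ ((ascs k W C H).rTensor M)
    ∘ₗ ((cmm k (C ⊗[k] H) W).rTensor M)
    ∘ₗ ((ρC.rTensor W).rTensor M)

/-- `M` is an `H^C`-HCC (Hopf cyclic coefficients) for the right `H`-comodule coalgebra `C` :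
the cyclic operator `τₙ` is well defined on the cotensor product `C^{⊗(n+1)} □_H M`
(so the whole cocyclic structure is well defined) and satisfies `τₙ^{n+1} = id` on it,
making `C^{⊗(n+1)} □_H M` a cocyclic module. -/
def IsHCHCC (ρC : C →ₗ[k] C ⊗[k] H) (ρM : M →ₗ[k] H ⊗[k] M)
    (act : M ⊗[k] H →ₗ[k] M) : Prop :=
  ∀ n : ℕ, ∀ x ∈ LinearMap.ker
      (cotensorDefect k (TpowρR k (LinearMap.mul' k H) ρC (n + 1)) ρM),
    tauC k ρC act n x ∈ LinearMap.ker
      (cotensorDefect k (TpowρR k (LinearMap.mul' k H) ρC (n + 1)) ρM)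
    ∧ (tauC k ρC act n)^[n+1] x = x

end CotensorSide

section CommCocommCond
variable {H : Type} [AddCommGroup H] [Module k H]
variable {A C W : Type} [AddCommGroup A] [Module k A] [AddCommGroup C] [Module k C]
  [AddCommGroup W] [Module k W]

/-- auxiliary map `(x ⊗ y) ⊗ z ↦ (z * x) ⊗ y`. -/
def muL (μ : H ⊗[k] H →ₗ[k] H) : (H ⊗[k] H) ⊗[k] H →ₗ[k] H ⊗[k] H :=
  (μ.rTensor H) ∘ₗ ascs k H H H ∘ₗ cmm k (H ⊗[k] H) H

/-- auxiliary map `(x ⊗ y) ⊗ z ↦ (y * z) ⊗ x`. -/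
def muR (μ : H ⊗[k] H →ₗ[k] H) : (H ⊗[k] H) ⊗[k] H →ₗ[k] H ⊗[k] H :=
  cmm k H H ∘ₗ (μ.lTensor H) ∘ₗ asc k H H H

/-- auxiliary map `z ⊗ (x ⊗ y) ↦ (z * x) ⊗ y`. -/
def nuL (μ : H ⊗[k] H →ₗ[k] H) : H ⊗[k] (H ⊗[k] H) →ₗ[k] H ⊗[k] H :=
  (μ.rTensor H) ∘ₗ ascs k H H H

/-- auxiliary map `z ⊗ (x ⊗ y) ↦ (y * z) ⊗ x`. -/
def nuR (μ : H ⊗[k] H →ₗ[k] H) : H ⊗[k] (H ⊗[k] H) →ₗ[k] H ⊗[k] H :=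
  cmm k H H ∘ₗ (μ.lTensor H) ∘ₗ asc k H H H ∘ₗ cmm k H (H ⊗[k] H)

/-- `H` coacts *cocommutatively* on the pair `(A, W)` (`A` and `W` left `H`-comodules):
`w₍₋₁₎ a₍₋₁₎⁽¹⁾ ⊗ a₍₋₁₎⁽²⁾ ⊗ a₍₀₎ ⊗ w₍₀₎ = a₍₋₁₎⁽²⁾ w₍₋₁₎ ⊗ a₍₋₁₎⁽¹⁾ ⊗ a₍₀₎ ⊗ w₍₀₎`. -/
def CocommCondL (μ : H ⊗[k] H →ₗ[k] H) (Δ : H →ₗ[k] H ⊗[k] H)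
    (ρA : A →ₗ[k] H ⊗[k] A) (ρW : W →ₗ[k] H ⊗[k] W) : Prop :=
  letI base : A ⊗[k] W →ₗ[k] ((H ⊗[k] H) ⊗[k] H) ⊗[k] (A ⊗[k] W) :=
    mid4 k (H ⊗[k] H) A H W ∘ₗ (TensorProduct.map ((Δ.rTensor A) ∘ₗ ρA) ρW)
  ((muL k μ).rTensor (A ⊗[k] W)) ∘ₗ base = ((muR k μ).rTensor (A ⊗[k] W)) ∘ₗ base

/-- `H` coacts *cocommutatively* on the pair `(W, C)` (`W` and `C` right `H`-comodules):
`w₍₀₎ ⊗ c₍₀₎ ⊗ w₍₁₎ c₍₁₎⁽¹⁾ ⊗ c₍₁₎⁽²⁾ = w₍₀₎ ⊗ c₍₀₎ ⊗ c₍₁₎⁽²⁾ w₍₁₎ ⊗ c₍₁₎⁽¹⁾`. -/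
def CocommCondR (μ : H ⊗[k] H →ₗ[k] H) (Δ : H →ₗ[k] H ⊗[k] H)
    (ρW : W →ₗ[k] W ⊗[k] H) (ρC : C →ₗ[k] C ⊗[k] H) : Prop :=
  letI base : W ⊗[k] C →ₗ[k] (W ⊗[k] C) ⊗[k] (H ⊗[k] (H ⊗[k] H)) :=
    mid4 k W H C (H ⊗[k] H) ∘ₗ (TensorProduct.map ρW ((Δ.lTensor C) ∘ₗ ρC))
  ((nuL k μ).lTensor (W ⊗[k] C)) ∘ₗ base = ((nuR k μ).lTensor (W ⊗[k] C)) ∘ₗ base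

end CommCocommCond
section Bicross
variable (F U : Type) [Ring F] [HopfAlgebra k F] [Ring U] [HopfAlgebra k U]

/-- inclusion `F → F ⊗ U`, `f ↦ f ⊗ 1`. -/
def jF : F →ₗ[k] F ⊗[k] U := (TensorProduct.mk k F U).flip 1
/-- inclusion `U → F ⊗ U`, `u ↦ 1 ⊗ u`. -/
def jU : U →ₗ[k] F ⊗[k] U := TensorProduct.mk k F U 1

/-- the right coaction of `H = F ⋈ U` on `F`: `f ↦ f⁽¹⁾ ⊗ (f⁽²⁾ ⋈ 1)`. -/
def bcoactF : F →ₗ[k] F ⊗[k] (F ⊗[k] U) :=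
  ((jF k F U).lTensor F) ∘ₗ (Coalgebra.comul (R := k) (A := F))

variable {F U}
variable (α : U ⊗[k] F →ₗ[k] F) (ρU : U →ₗ[k] U ⊗[k] F)

/-- the multiplication of the bicrossed product `F ⋈ U`:
`(f ⋈ u)(g ⋈ v) = f (u⁽¹⁾ ▷ g) ⋈ u⁽²⁾ v`, where `▷` is the action `α`. -/
def bmul : (F ⊗[k] U) ⊗[k] (F ⊗[k] U) →ₗ[k] F ⊗[k] U :=
  letI lam : (F ⊗[k] U) ⊗[k] F →ₗ[k] F :=
    (LinearMap.mul' k F) ∘ₗ (α.lTensor F) ∘ₗ asc k F U F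
  (TensorProduct.map lam (LinearMap.mul' k U))
    ∘ₗ mid4 k (F ⊗[k] U) U F U
    ∘ₗ ((ascs k F U U).rTensor (F ⊗[k] U))
    ∘ₗ (((Coalgebra.comul (R := k) (A := U)).lTensor F).rTensor (F ⊗[k] U))

/-- the comultiplication of the bicrossed product `F ⋈ U`:
`Δ(f ⋈ u) = (f⁽¹⁾ ⋈ u⁽¹⁾₍₀₎) ⊗ (f⁽²⁾ u⁽¹⁾₍₁₎ ⋈ u⁽²⁾)`, where `u ↦ u₍₀₎ ⊗ u₍₁₎` is the
coaction `ρU` of `F` on `U`. -/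
def bcomul : (F ⊗[k] U) →ₗ[k] (F ⊗[k] U) ⊗[k] (F ⊗[k] U) :=
  letI w : F ⊗[k] (F ⊗[k] U) →ₗ[k] F ⊗[k] U :=
    ((opMul k F (LinearMap.mul' k F)).rTensor U) ∘ₗ ascs k F F U
  (w.lTensor (F ⊗[k] U))
    ∘ₗ asc k (F ⊗[k] U) F (F ⊗[k] U)
    ∘ₗ ((ascs k F U F).rTensor (F ⊗[k] U))
    ∘ₗ ((ρU.lTensor F).rTensor (F ⊗[k] U))
    ∘ₗ mid4 k F F U U
    ∘ₗ (TensorProduct.map (Coalgebra.comul (R := k) (A := F))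
          (Coalgebra.comul (R := k) (A := U)))

/-- the antipode of the bicrossed product `F ⋈ U`:
`S(f ⋈ u) = (1 ⋈ S_U(u₍₀₎)) · (S_F(f u₍₁₎) ⋈ 1)`. -/
def bS : (F ⊗[k] U) →ₗ[k] F ⊗[k] U :=
  bmul k α ∘ₗ (TensorProduct.map (jU k F U ∘ₗ (HopfAlgebra.antipode (R := k) (A := U)))
      (jF k F U ∘ₗ (HopfAlgebra.antipode (R := k) (A := F))
        ∘ₗ (opMul k F (LinearMap.mul' k F))))
    ∘ₗ asc k U F F
    ∘ₗ cmm k F (U ⊗[k] F)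
    ∘ₗ (ρU.lTensor F)

/-- the right coaction of `H = F ⋈ U` on `U`: `u ↦ u₍₀₎ ⊗ (u₍₁₎ ⋈ 1)`. -/
def bcoactU : U →ₗ[k] U ⊗[k] (F ⊗[k] U) :=
  ((jF k F U).lTensor U) ∘ₗ ρU

/-- `(F, U)` together with the action `α : U ⊗ F → F` and the coaction `ρU : U → U ⊗ F`
is a matched pair of Hopf algebras, so that the bicrossed product `F ⋈ U` (with
multiplication `bmul` and comultiplication `bcomul`) is a Hopf algebra:
`F` is a left `U`-module algebra, `U` is a right `F`-comodule coalgebra, and the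
Majid compatibility conditions hold. -/
def IsMatchedPair : Prop :=
  -- `α` is a left `U`-module structure on `F`
  (∀ f : F, α ((1 : U) ⊗ₜ[k] f) = f)
  ∧ (α ∘ₗ ((LinearMap.mul' k U).rTensor F) = α ∘ₗ (α.lTensor U) ∘ₗ asc k U U F)
  -- making `F` a `U`-module algebra
  ∧ (α ∘ₗ ((LinearMap.mul' k F).lTensor U)
      = (LinearMap.mul' k F) ∘ₗ (TensorProduct.map α α) ∘ₗ mid4 k U U F F
          ∘ₗ ((Coalgebra.comul (R := k) (A := U)).rTensor (F ⊗[k] F)))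
  ∧ (∀ u : U, α (u ⊗ₜ[k] (1 : F)) = (Coalgebra.counit (R := k) (A := U) u) • (1 : F))
  -- `ρU` is a right `F`-comodule structure on `U`
  ∧ IsCoassocR k ρU ∧ IsCounitalR k ρU
  -- making `U` an `F`-comodule coalgebra
  ∧ (((Coalgebra.comul (R := k) (A := U)).rTensor F) ∘ₗ ρU
      = ((LinearMap.mul' k F).lTensor (U ⊗[k] U)) ∘ₗ mid4 k U F U F
          ∘ₗ (TensorProduct.map ρU ρU) ∘ₗ (Coalgebra.comul (R := k) (A := U)))
  ∧ ((TensorProduct.lid k F).toLinearMap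
        ∘ₗ ((Coalgebra.counit (R := k) (A := U)).rTensor F) ∘ₗ ρU
      = (Algebra.linearMap k F) ∘ₗ (Coalgebra.counit (R := k) (A := U)))
  -- `ρU(1) = 1 ⊗ 1`
  ∧ (ρU 1 = (1 : U) ⊗ₜ[k] (1 : F))
  -- multiplicativity: `ρ(uv) = u⁽¹⁾₍₀₎ v₍₀₎ ⊗ u⁽¹⁾₍₁₎ (u⁽²⁾ ▷ v₍₁₎)`
  ∧ (ρU ∘ₗ (LinearMap.mul' k U)
      = letI ζ : (((U ⊗[k] F) ⊗[k] U) ⊗[k] F) →ₗ[k] U ⊗[k] F :=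
          (TensorProduct.map (LinearMap.mul' k U) (LinearMap.mul' k F))
            ∘ₗ asc k (U ⊗[k] U) F F
            ∘ₗ ((ascs k U U F ∘ₗ ((cmm k F U).lTensor U) ∘ₗ asc k U F U).rTensor F)
        ζ ∘ₗ (α.lTensor ((U ⊗[k] F) ⊗[k] U))
          ∘ₗ mid4 k (U ⊗[k] F) U U F
          ∘ₗ ((ρU.rTensor U).rTensor (U ⊗[k] F))
          ∘ₗ (TensorProduct.map (Coalgebra.comul (R := k) (A := U)) ρU))
  -- compatibility: `u⁽²⁾₍₀₎ ⊗ (u⁽¹⁾ ▷ f) u⁽²⁾₍₁₎ = u⁽¹⁾₍₀₎ ⊗ u⁽¹⁾₍₁₎ (u⁽²⁾ ▷ f)`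
  ∧ (((opMul k F (LinearMap.mul' k F)).lTensor U) ∘ₗ asc k U F F
        ∘ₗ (α.lTensor (U ⊗[k] F)) ∘ₗ asc k (U ⊗[k] F) U F
        ∘ₗ ((cmm k U (U ⊗[k] F)).rTensor F) ∘ₗ ((ρU.lTensor U).rTensor F)
        ∘ₗ ((Coalgebra.comul (R := k) (A := U)).rTensor F)
      = ((LinearMap.mul' k F).lTensor U) ∘ₗ asc k U F F
          ∘ₗ (α.lTensor (U ⊗[k] F)) ∘ₗ asc k (U ⊗[k] F) U F
          ∘ₗ ((ρU.rTensor U).rTensor F)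
          ∘ₗ ((Coalgebra.comul (R := k) (A := U)).rTensor F))
  -- compatibility: `Δ_F(u ▷ f) = (u⁽¹⁾₍₀₎ ▷ f⁽¹⁾) ⊗ u⁽¹⁾₍₁₎ (u⁽²⁾ ▷ f⁽²⁾)`
  ∧ ((Coalgebra.comul (R := k) (A := F)) ∘ₗ α
      = letI ξ : (U ⊗[k] F) ⊗[k] F →ₗ[k] F ⊗[k] F :=
          (α.rTensor F) ∘ₗ ascs k U F F ∘ₗ ((cmm k F F).lTensor U) ∘ₗ asc k U F F
        ((LinearMap.mul' k F).lTensor F) ∘ₗ asc k F F F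
          ∘ₗ (TensorProduct.map ξ α)
          ∘ₗ mid4 k (U ⊗[k] F) U F F
          ∘ₗ ((ρU.rTensor U).rTensor (F ⊗[k] F))
          ∘ₗ (TensorProduct.map (Coalgebra.comul (R := k) (A := U))
                (Coalgebra.comul (R := k) (A := F))))
  -- compatibility: `ε(u ▷ f) = ε(u) ε(f)`
  ∧ (∀ (u : U) (f : F),
      Coalgebra.counit (R := k) (α (u ⊗ₜ[k] f))
        = Coalgebra.counit (R := k) u * Coalgebra.counit (R := k) f)

end Bicross
section CrossedProduct
variable {H : Type} [Ring H] [Algebra k H]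
variable {A B : Type} [Ring A] [Algebra k A] [Ring B] [Algebra k B]

/-- the multiplication of the crossed product algebra `A ⋊ B` for a left `H`-module
algebra `A` (action `β`) and a left `H`-comodule algebra `B` (coaction `ρB`):
`(a ⋊ b)(a' ⋊ b') = a (b₍₋₁₎ · a') ⋊ b₍₀₎ b'`. -/
def crossMul (β : H ⊗[k] A →ₗ[k] A) (ρB : B →ₗ[k] H ⊗[k] B) :
    (A ⊗[k] B) ⊗[k] (A ⊗[k] B) →ₗ[k] A ⊗[k] B :=
  letI lam : (A ⊗[k] H) ⊗[k] A →ₗ[k] A :=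
    (LinearMap.mul' k A) ∘ₗ (β.lTensor A) ∘ₗ asc k A H A
  (TensorProduct.map lam (LinearMap.mul' k B))
    ∘ₗ mid4 k (A ⊗[k] H) B A B
    ∘ₗ ((ascs k A H B).rTensor (A ⊗[k] B))
    ∘ₗ ((ρB.lTensor A).rTensor (A ⊗[k] B))

end CrossedProduct

section SimplicialOps
variable {R : Type} [AddCommGroup R] [Module k R]

/-- the rotation `a₀ ⊗ ⋯ ⊗ aₙ ↦ aₙ ⊗ a₀ ⊗ ⋯ ⊗ aₙ₋₁` on `Tpow k R (n+1)`. -/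
def rot (n : ℕ) : (Tpow k R (n+1) : Type) →ₗ[k] (Tpow k R (n+1) : Type) :=
  cmm k (Tpow k R n : Type) R ∘ₗ (epow k R n).toLinearMap

/-- `merge μ n i` multiplies the `i`-th and `(i+1)`-st tensor factors of `Tpow k R (n+2)`
(for `0 ≤ i ≤ n`; values at out-of-range indices are junk). -/
def merge (μ : R ⊗[k] R →ₗ[k] R) :
    ∀ (n i : ℕ), (Tpow k R (n+2) : Type) →ₗ[k] (Tpow k R (n+1) : Type)
  | n, 0 => (μ.rTensor (Tpow k R n : Type)) ∘ₗ ascs k R R (Tpow k R n : Type)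
  | 0, _+1 => (μ.rTensor (Tpow k R 0 : Type)) ∘ₗ ascs k R R (Tpow k R 0 : Type)
  | n+1, i+1 => (merge μ n i).lTensor R

/-- `ins e n i` inserts the element `e` in position `i+1` of `Tpow k R (n+1)`
(for `0 ≤ i ≤ n`; values at out-of-range indices are junk). -/
def ins (e : R) : ∀ (n i : ℕ), (Tpow k R (n+1) : Type) →ₗ[k] (Tpow k R (n+2) : Type)
  | n, 0 => (TensorProduct.mk k R (Tpow k R n : Type) e).lTensor R
  | 0, _+1 => (TensorProduct.mk k R (Tpow k R 0 : Type) e).lTensor R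
  | n+1, i+1 => (ins e n i).lTensor R

/-- the `i`-th coface operator of the standard cocyclic module of an algebra `(R, μ)`
(on cochains `Hom(R^{⊗(n+1)}, V)`); `i = n+1` is the twisted last coface
`(δ_{n+1} f)(r₀ ⊗ ⋯ ⊗ r_{n+1}) = f(r_{n+1} r₀ ⊗ r₁ ⊗ ⋯ ⊗ rₙ)`. -/
def faceAlg {V : Type} [AddCommGroup V] [Module k V] (μ : R ⊗[k] R →ₗ[k] R) (n i : ℕ)
    (f : (Tpow k R (n+1) : Type) →ₗ[k] V) : (Tpow k R (n+2) : Type) →ₗ[k] V :=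
  if i = n+1 then f ∘ₗ merge k μ n 0 ∘ₗ rot k (n+1) else f ∘ₗ merge k μ n i

/-- the `i`-th codegeneracy operator of the standard cocyclic module of an algebra. -/
def degAlg {V : Type} [AddCommGroup V] [Module k V] (e : R) (n i : ℕ)
    (f : (Tpow k R (n+2) : Type) →ₗ[k] V) : (Tpow k R (n+1) : Type) →ₗ[k] V :=
  f ∘ₗ ins k e n i

/-- the cyclic operator of the standard cocyclic module of an algebra:
`(τₙ f)(r₀ ⊗ ⋯ ⊗ rₙ) = f(rₙ ⊗ r₀ ⊗ ⋯ ⊗ rₙ₋₁)`. -/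
def cycAlg {V : Type} [AddCommGroup V] [Module k V] (n : ℕ)
    (f : (Tpow k R (n+1) : Type) →ₗ[k] V) : (Tpow k R (n+1) : Type) →ₗ[k] V :=
  f ∘ₗ rot k n

/-- the Hochschild coboundary `b = Σ_{i=0}^{n+1} (-1)^i δᵢ` of the standard (twisted)
cocyclic module of an algebra `(R, μ)`. -/
def bAlg {V : Type} [AddCommGroup V] [Module k V] (μ : R ⊗[k] R →ₗ[k] R) (n : ℕ)
    (f : (Tpow k R (n+1) : Type) →ₗ[k] V) : (Tpow k R (n+2) : Type) →ₗ[k] V :=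
  ∑ i ∈ Finset.range (n+2), ((-1 : ℤ)^i) • faceAlg k μ n i f

end SimplicialOps
section ModAlgSide
variable {H : Type} [Ring H] [HopfAlgebra k H]
variable {A M : Type} [AddCommGroup A] [Module k A] [AddCommGroup M] [Module k M]

/-- the diagonal left action of `H` on `Tpow k A n` induced by a left action `β` on `A`:
`h · (a₁ ⊗ ⋯ ⊗ aₙ) = h⁽¹⁾·a₁ ⊗ ⋯ ⊗ h⁽ⁿ⁾·aₙ`. -/
def actTpow (β : H ⊗[k] A →ₗ[k] A) :
    ∀ n : ℕ, H ⊗[k] (Tpow k A n : Type) →ₗ[k] (Tpow k A n : Type)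
  | 0 => (TensorProduct.lid k k).toLinearMap
      ∘ₗ ((Coalgebra.counit (R := k) (A := H)).rTensor k)
  | n+1 => (TensorProduct.map β (actTpow β n)) ∘ₗ mid4 k H H A (Tpow k A n : Type)
      ∘ₗ ((Coalgebra.comul (R := k) (A := H)).rTensor (A ⊗[k] (Tpow k A n : Type)))

/-- the left action of `H` on `M ⊗ A^{⊗(n+1)}` used to define the HKRS cocyclic module
of a module algebra: `h · (m ⊗ ã) = m · S(h⁽¹⁾) ⊗ h⁽²⁾ · ã`. -/
def actMA (β : H ⊗[k] A →ₗ[k] A) (act : M ⊗[k] H →ₗ[k] M) (n : ℕ) :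
    H ⊗[k] (M ⊗[k] (Tpow k A (n+1) : Type)) →ₗ[k] M ⊗[k] (Tpow k A (n+1) : Type) :=
  letI w : H ⊗[k] M →ₗ[k] M :=
    act ∘ₗ cmm k H M ∘ₗ ((HopfAlgebra.antipode (R := k)).rTensor M)
  (TensorProduct.map w (actTpow k β (n+1)))
    ∘ₗ mid4 k H H M (Tpow k A (n+1) : Type)
    ∘ₗ ((Coalgebra.comul (R := k) (A := H)).rTensor (M ⊗[k] (Tpow k A (n+1) : Type)))

/-- `φ : M ⊗ A^{⊗(n+1)} → k` is `H`-equivariant (i.e. `φ ∈ Hom_H(M ⊗ A^{⊗(n+1)}, k)`),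
with `k` the trivial `H`-module. -/
def IsInvariantMA (β : H ⊗[k] A →ₗ[k] A) (act : M ⊗[k] H →ₗ[k] M) (n : ℕ)
    (φ : (M ⊗[k] (Tpow k A (n+1) : Type)) →ₗ[k] k) : Prop :=
  φ ∘ₗ actMA k β act n
    = φ ∘ₗ (TensorProduct.lid k (M ⊗[k] (Tpow k A (n+1) : Type))).toLinearMap
        ∘ₗ ((Coalgebra.counit (R := k) (A := H)).rTensor
              (M ⊗[k] (Tpow k A (n+1) : Type)))

/-- the twisted rotation on `M ⊗ A^{⊗(n+1)}`:
`m ⊗ a₀ ⊗ ⋯ ⊗ aₙ ↦ m₍₀₎ ⊗ S⁻¹(m₍₋₁₎)·aₙ ⊗ a₀ ⊗ ⋯ ⊗ aₙ₋₁`. -/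
def rotMA (β : H ⊗[k] A →ₗ[k] A) (Sinv : H →ₗ[k] H) (ρM : M →ₗ[k] H ⊗[k] M) (n : ℕ) :
    M ⊗[k] (Tpow k A (n+1) : Type) →ₗ[k] M ⊗[k] (Tpow k A (n+1) : Type) :=
  (TensorProduct.leftComm k A M (Tpow k A n : Type)).toLinearMap
    ∘ₗ ((β ∘ₗ (Sinv.rTensor A)).rTensor (M ⊗[k] (Tpow k A n : Type)))
    ∘ₗ mid4 k H M A (Tpow k A n : Type)
    ∘ₗ ((rot k n).lTensor (H ⊗[k] M))
    ∘ₗ (ρM.rTensor (Tpow k A (n+1) : Type))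

/-- the cyclic operator of the HKRS cocyclic module `C^n_H(A, M) = Hom_H(M ⊗ A^{⊗(n+1)}, k)`:
`(τₙ φ)(m ⊗ a₀ ⊗ ⋯ ⊗ aₙ) = φ(m₍₀₎ ⊗ S⁻¹(m₍₋₁₎)·aₙ ⊗ a₀ ⊗ ⋯ ⊗ aₙ₋₁)`. -/
def cycMA (β : H ⊗[k] A →ₗ[k] A) (Sinv : H →ₗ[k] H) (ρM : M →ₗ[k] H ⊗[k] M) (n : ℕ)
    (φ : (M ⊗[k] (Tpow k A (n+1) : Type)) →ₗ[k] k) :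
    (M ⊗[k] (Tpow k A (n+1) : Type)) →ₗ[k] k :=
  φ ∘ₗ rotMA k β Sinv ρM n


/-- `M` is an `_A H`-SAYD coefficient module for the left `H`-module algebra `A` (in the
generalized sense): the cyclic operator of the HKRS cocyclic module
`C^n_H(A,M) = Hom_H(M ⊗ A^{⊗(n+1)}, k)` is well defined on equivariant cochains and
satisfies `τₙ^{n+1} = id`. -/
def IsMASAYD (β : H ⊗[k] A →ₗ[k] A) (Sinv : H →ₗ[k] H) (ρM : M →ₗ[k] H ⊗[k] M)
    (act : M ⊗[k] H →ₗ[k] M) : Prop :=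
  ∀ n : ℕ, ∀ φ : (M ⊗[k] (Tpow k A (n+1) : Type)) →ₗ[k] k,
    IsInvariantMA k β act n φ →
      IsInvariantMA k β act n (cycMA k β Sinv ρM n φ)
      ∧ (cycMA k β Sinv ρM n)^[n+1] φ = φ

end ModAlgSide

section ModAlgSideRing
variable {H : Type} [Ring H] [HopfAlgebra k H]
variable {A M : Type} [Ring A] [Algebra k A] [AddCommGroup M] [Module k M]

/-- the `i`-th coface of the HKRS cocyclic module `C^n_H(A, M)`; `i = n+1` is the twisted
last coface `(δ_{n+1} φ)(m ⊗ a₀ ⊗ ⋯ ⊗ a_{n+1}) = φ(m₍₀₎ ⊗ (S⁻¹(m₍₋₁₎)·a_{n+1}) a₀ ⊗ ⋯ ⊗ aₙ)`. -/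
def faceMA (β : H ⊗[k] A →ₗ[k] A) (Sinv : H →ₗ[k] H) (ρM : M →ₗ[k] H ⊗[k] M)
    (n i : ℕ) (φ : (M ⊗[k] (Tpow k A (n+1) : Type)) →ₗ[k] k) :
    (M ⊗[k] (Tpow k A (n+2) : Type)) →ₗ[k] k :=
  if i = n+1 then
    φ ∘ₗ ((merge k (LinearMap.mul' k A) n 0).lTensor M) ∘ₗ rotMA k β Sinv ρM (n+1)
  else φ ∘ₗ ((merge k (LinearMap.mul' k A) n i).lTensor M)

/-- the `i`-th codegeneracy of the HKRS cocyclic module `C^n_H(A, M)`. -/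
def degMA (n i : ℕ) (φ : (M ⊗[k] (Tpow k A (n+2) : Type)) →ₗ[k] k) :
    (M ⊗[k] (Tpow k A (n+1) : Type)) →ₗ[k] k :=
  φ ∘ₗ ((ins k (1 : A) n i).lTensor M)

/-- the Hochschild coboundary of the HKRS cocyclic module `C^n_H(A, M)`. -/
def bMA (β : H ⊗[k] A →ₗ[k] A) (Sinv : H →ₗ[k] H) (ρM : M →ₗ[k] H ⊗[k] M)
    (n : ℕ) (φ : (M ⊗[k] (Tpow k A (n+1) : Type)) →ₗ[k] k) :
    (M ⊗[k] (Tpow k A (n+2) : Type)) →ₗ[k] k :=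
  ∑ i ∈ Finset.range (n+2), ((-1 : ℤ)^i) • faceMA k β Sinv ρM n i φ

end ModAlgSideRing

section ComodAlgSide
variable {H : Type} [Ring H] [HopfAlgebra k H]
variable {B M : Type} [Ring B] [Algebra k B] [AddCommGroup M] [Module k M]

/-- the `i`-th coface of the cocyclic module `C^n_H(B, M) = Hom^H(B^{⊗(n+1)}, M)` of a left
`H`-comodule algebra `B`; `i = n+1` is the twisted last coface
`(δ_{n+1} f)(b₀ ⊗ ⋯ ⊗ b_{n+1}) = f(b_{n+1}₍₀₎ b₀ ⊗ b₁ ⊗ ⋯ ⊗ bₙ) · b_{n+1}₍₋₁₎`. -/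
def faceCB (ρB : B →ₗ[k] H ⊗[k] B) (act : M ⊗[k] H →ₗ[k] M) (n i : ℕ)
    (f : (Tpow k B (n+1) : Type) →ₗ[k] M) : (Tpow k B (n+2) : Type) →ₗ[k] M :=
  if i = n+1 then
    act ∘ₗ cmm k H M ∘ₗ ((f ∘ₗ merge k (LinearMap.mul' k B) n 0).lTensor H)
      ∘ₗ rotρL k ρB (n+1)
  else f ∘ₗ merge k (LinearMap.mul' k B) n i

/-- the `i`-th codegeneracy of `C^n_H(B, M)`. -/
def degCB (n i : ℕ) (f : (Tpow k B (n+2) : Type) →ₗ[k] M) :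
    (Tpow k B (n+1) : Type) →ₗ[k] M :=
  f ∘ₗ ins k (1 : B) n i

/-- the Hochschild coboundary of `C^n_H(B, M)`. -/
def bCB (ρB : B →ₗ[k] H ⊗[k] B) (act : M ⊗[k] H →ₗ[k] M) (n : ℕ)
    (f : (Tpow k B (n+1) : Type) →ₗ[k] M) : (Tpow k B (n+2) : Type) →ₗ[k] M :=
  ∑ i ∈ Finset.range (n+2), ((-1 : ℤ)^i) • faceCB k ρB act n i f

end ComodAlgSide
section PsiSec
variable {H : Type} [Ring H] [HopfAlgebra k H]
variable {A B M : Type} [AddCommGroup A] [Module k A] [AddCommGroup B] [Module k B]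
  [AddCommGroup M] [Module k M]

/-- the auxiliary "unzipping" map `(A ⊗ B)^{⊗ n} → H ⊗ (A^{⊗ n} ⊗ B^{⊗ n})` underlying the
cup-product map `Ψ`:
`(a₀ ⊗ b₀) ⊗ ⋯ ⊗ (aₙ ⊗ bₙ) ↦ b₀₍₋₁₎ ⋯ bₙ₍₋₁₎ ⊗
  ((S⁻¹(b₀₍₋₁₎ ⋯ bₙ₍₋₁₎)·a₀ ⊗ S⁻¹(b₁₍₋₁₎ ⋯ bₙ₍₋₁₎)·a₁ ⊗ ⋯) ⊗ (b₀₍₀₎ ⊗ ⋯ ⊗ bₙ₍₀₎))`. -/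
def Gmap (β : H ⊗[k] A →ₗ[k] A) (Sinv : H →ₗ[k] H) (ρB : B →ₗ[k] H ⊗[k] B) :
    ∀ n : ℕ, (Tpow k (A ⊗[k] B) n : Type) →ₗ[k]
      H ⊗[k] ((Tpow k A n : Type) ⊗[k] (Tpow k B n : Type))
  | 0 => (TensorProduct.mk k H (k ⊗[k] k) 1) ∘ₗ ((TensorProduct.mk k k k).flip 1)
  | n+1 =>
    letI TA : Type := (Tpow k A n : Type)
    letI TB : Type := (Tpow k B n : Type)
    letI inner : (H ⊗[k] (A ⊗[k] B)) ⊗[k] (H ⊗[k] (TA ⊗[k] TB)) →ₗ[k]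
        (A ⊗[k] TA) ⊗[k] (B ⊗[k] TB) :=
      (((β.rTensor TA) ∘ₗ ascs k H A TA).rTensor (B ⊗[k] TB))
        ∘ₗ ascs k H (A ⊗[k] TA) (B ⊗[k] TB)
        ∘ₗ ((mid4 k A B TA TB).lTensor H)
        ∘ₗ ((Sinv ∘ₗ LinearMap.mul' k H).rTensor ((A ⊗[k] B) ⊗[k] (TA ⊗[k] TB)))
        ∘ₗ mid4 k H (A ⊗[k] B) H (TA ⊗[k] TB)
    (inner.lTensor H)
      ∘ₗ ((LinearMap.mul' k H).rTensor
            ((H ⊗[k] (A ⊗[k] B)) ⊗[k] (H ⊗[k] (TA ⊗[k] TB))))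
      ∘ₗ mid4 k H (H ⊗[k] (A ⊗[k] B)) H (H ⊗[k] (TA ⊗[k] TB))
      ∘ₗ (TensorProduct.map
            (((TensorProduct.leftComm k A H B).toLinearMap.lTensor H)
              ∘ₗ (TensorProduct.leftComm k A H (H ⊗[k] B)).toLinearMap)
            (asc k H H (TA ⊗[k] TB)))
      ∘ₗ ((((Coalgebra.comul (R := k) (A := H)).rTensor (TA ⊗[k] TB)).lTensor
            (A ⊗[k] (H ⊗[k] (H ⊗[k] B)))))
      ∘ₗ ((((ρB.lTensor H ∘ₗ ρB).lTensor A)).rTensor (H ⊗[k] (TA ⊗[k] TB)))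
      ∘ₗ ((Gmap β Sinv ρB n).lTensor (A ⊗[k] B))

/-- the cup-product cochain map
`Ψ(φ ⊗ ψ)(a₀ ⋊ b₀ ⊗ ⋯ ⊗ aₙ ⋊ bₙ)
  = φ(ψ(b₀₍₀₎ ⊗ ⋯ ⊗ bₙ₍₀₎) ⊗ S⁻¹(b₀₍₋₁₎ ⋯ bₙ₍₋₁₎)·a₀ ⊗ ⋯ ⊗ S⁻¹(bₙ₍₋₁₎)·aₙ)`. -/
def Psi (β : H ⊗[k] A →ₗ[k] A) (Sinv : H →ₗ[k] H) (ρB : B →ₗ[k] H ⊗[k] B) (n : ℕ)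
    (φ : (M ⊗[k] (Tpow k A (n+1) : Type)) →ₗ[k] k)
    (ψ : (Tpow k B (n+1) : Type) →ₗ[k] M) :
    (Tpow k (A ⊗[k] B) (n+1) : Type) →ₗ[k] k :=
  φ ∘ₗ cmm k (Tpow k A (n+1) : Type) M
    ∘ₗ (ψ.lTensor (Tpow k A (n+1) : Type))
    ∘ₗ (TensorProduct.lid k ((Tpow k A (n+1) : Type) ⊗[k] (Tpow k B (n+1) : Type))).toLinearMap
    ∘ₗ ((Coalgebra.counit (R := k) (A := H)).rTensor
          ((Tpow k A (n+1) : Type) ⊗[k] (Tpow k B (n+1) : Type)))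
    ∘ₗ Gmap k β Sinv ρB (n+1)

end PsiSec

section Casts
variable {R : Type} [AddCommGroup R] [Module k R]

/-- transport along an equality of tensor-power indices. -/
def tcast (R : Type) [AddCommGroup R] [Module k R] {m n : ℕ} (e : m = n) :
    (Tpow k R m : Type) →ₗ[k] (Tpow k R n : Type) := by
  subst e; exact LinearMap.id

end Casts

section Iterates
variable {H : Type} [Ring H] [HopfAlgebra k H]

/-- iterated last coface on the HKRS complex `C^•_H(A,M)`, lifting a `p`-cochain to a
`(p+q)`-cochain (one factor of the Alexander--Whitney map). -/
def iterLastMA {A M : Type} [Ring A] [Algebra k A] [AddCommGroup M] [Module k M]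
    (β : H ⊗[k] A →ₗ[k] A) (Sinv : H →ₗ[k] H) (ρM : M →ₗ[k] H ⊗[k] M) (p : ℕ) :
    ∀ q : ℕ, ((M ⊗[k] (Tpow k A (p+1) : Type)) →ₗ[k] k) →
      ((M ⊗[k] (Tpow k A (p+q+1) : Type)) →ₗ[k] k)
  | 0, φ => φ
  | q+1, φ => faceMA k β Sinv ρM (p+q) (p+q+1) (iterLastMA β Sinv ρM p q φ)

/-- iterated zeroth coface on the complex `C^•_H(B,M)`, lifting a `q`-cochain to a
`(q+p)`-cochain (the other factor of the Alexander--Whitney map). -/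
def iterFace0CB {B M : Type} [Ring B] [Algebra k B] [AddCommGroup M] [Module k M]
    (ρB : B →ₗ[k] H ⊗[k] B) (act : M ⊗[k] H →ₗ[k] M) (q : ℕ) :
    ∀ p : ℕ, ((Tpow k B (q+1) : Type) →ₗ[k] M) → ((Tpow k B (q+p+1) : Type) →ₗ[k] M)
  | 0, ψ => ψ
  | p+1, ψ => faceCB k ρB act (q+p) 0 (iterFace0CB ρB act q p ψ)

/-- the cup product `⊔ = Ψ ∘ AW` of a `p`-cochain of `C^•_H(A,M)` and a `q`-cochain of
`C^•_H(B,M)`, a `(p+q)`-cochain of the cyclic complex of `A ⋊ B`. -/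
def cupAW {A B M : Type} [Ring A] [Algebra k A] [Ring B] [Algebra k B]
    [AddCommGroup M] [Module k M]
    (β : H ⊗[k] A →ₗ[k] A) (Sinv : H →ₗ[k] H) (ρB : B →ₗ[k] H ⊗[k] B)
    (ρM : M →ₗ[k] H ⊗[k] M) (act : M ⊗[k] H →ₗ[k] M) (p q : ℕ)
    (φ : (M ⊗[k] (Tpow k A (p+1) : Type)) →ₗ[k] k)
    (ψ : (Tpow k B (q+1) : Type) →ₗ[k] M) :
    (Tpow k (A ⊗[k] B) (p+q+1) : Type) →ₗ[k] k :=
  Psi k β Sinv ρB (p+q) (iterLastMA k β Sinv ρM p q φ)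
    ((iterFace0CB k ρB act q p ψ) ∘ₗ tcast k B (show p+q+1 = q+p+1 by omega))

end Iterates


section AuxHopf
open Coalgebra HopfAlgebra
variable {k}
variable {H : Type} [Ring H] [HopfAlgebra k H]


local notation "S" => HopfAlgebra.antipode (R := k) (A := H)
local notation "ε" => Coalgebra.counit (R := k) (A := H)

lemma antipode_one' : S 1 = 1 := by
  have := mul_antipode_rTensor_comul_apply (R := k) (A := H) 1
  simpa [Algebra.TensorProduct.one_def] using this

/-- product representation -/
def mulRepr {x y : H} {ι κ : Type} (rx : Coalgebra.Repr k x ι) (ry : Coalgebra.Repr k y κ) :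
    Coalgebra.Repr k (x * y) (ι × κ) where
  index := rx.index ×ˢ ry.index
  left p := rx.left p.1 * ry.left p.2
  right p := rx.right p.1 * ry.right p.2
  eq := by
    rw [Bialgebra.comul_mul, ← rx.eq, ← ry.eq, Finset.sum_mul_sum, Finset.sum_product]
    simp [Algebra.TensorProduct.tmul_mul_tmul]

lemma K1 {x y : H} {ι κ : Type} (rx : Coalgebra.Repr k x ι) (ry : Coalgebra.Repr k y κ) :
    ∑ i ∈ rx.index, ∑ j ∈ ry.index,
      S (rx.left i * ry.left j) * (rx.right i * ry.right j)
      = (ε x * ε y) • (1 : H) := by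
  have h2 : ∑ p ∈ rx.index ×ˢ ry.index,
      S (rx.left p.1 * ry.left p.2) * (rx.right p.1 * ry.right p.2)
      = ε (x * y) • (1 : H) := sum_antipode_mul_eq_smul (R := k) (mulRepr rx ry)
  rw [Finset.sum_product] at h2
  simpa using h2


lemma sum_counit_smul_left {x : H} {ι : Type} (r : Coalgebra.Repr k x ι) :
    ∑ i ∈ r.index, ε (r.right i) • r.left i = x := by
  have := sum_tmul_counit_eq (R := k) r
  have h2 := congrArg (TensorProduct.rid k H) this
  simpa [map_sum, -Coalgebra.sum_tmul_counit_eq] using h2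

lemma sum_counit_smul_right {x : H} {ι : Type} (r : Coalgebra.Repr k x ι) :
    ∑ i ∈ r.index, ε (r.left i) • r.right i = x := by
  have := sum_counit_tmul_eq (R := k) r
  have h2 := congrArg (TensorProduct.lid k H) this
  simpa [map_sum, -Coalgebra.sum_counit_tmul_eq] using h2

lemma K2 {x y : H} {ι κ : Type} (rx : Coalgebra.Repr k x ι) (ry : Coalgebra.Repr k y κ) :
    ∑ i ∈ rx.index, ∑ j ∈ ry.index,
      (rx.left i * ry.left j) * (S (ry.right j) * S (rx.right i))
      = (ε x * ε y) • (1 : H) := by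
  have step : ∀ i ∈ rx.index, ∑ j ∈ ry.index,
      (rx.left i * ry.left j) * (S (ry.right j) * S (rx.right i))
      = ε y • (rx.left i * S (rx.right i)) := by
    intro i _
    have : ∀ j, (rx.left i * ry.left j) * (S (ry.right j) * S (rx.right i))
        = rx.left i * ((ry.left j * S (ry.right j)) * S (rx.right i)) := by
      intro j; simp [mul_assoc]
    simp only [this]
    rw [← Finset.mul_sum, ← Finset.sum_mul, sum_mul_antipode_eq_smul ry]
    simp [smul_mul_assoc, mul_smul_comm]
  rw [Finset.sum_congr rfl step, ← Finset.smul_sum, sum_mul_antipode_eq_smul rx,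
    smul_smul, mul_comm (ε y) (ε x)]

/-- reassociation of a double Sweedler sum under an arbitrary linear map. -/
lemma assoc_sum {T : Type} [AddCommGroup T] [Module k T]
    (Ψ : H ⊗[k] (H ⊗[k] H) →ₗ[k] T) {x : H} {ι : Type} (r : Coalgebra.Repr k x ι)
    (r1 : ∀ i, Coalgebra.Repr k (r.left i) (H × H)) (r2 : ∀ i, Coalgebra.Repr k (r.right i) (H × H)) :
    ∑ i ∈ r.index, ∑ j ∈ (r1 i).index,
      Ψ ((r1 i).left j ⊗ₜ[k] ((r1 i).right j ⊗ₜ[k] r.right i))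
    = ∑ i ∈ r.index, ∑ j ∈ (r2 i).index,
      Ψ (r.left i ⊗ₜ[k] ((r2 i).left j ⊗ₜ[k] (r2 i).right j)) := by
  have := Coalgebra.sum_tmul_tmul_eq r r1 r2
  have h2 := congrArg Ψ this
  simpa [map_sum] using h2

/-- `a ⊗ (b ⊗ c) ↦ S(a*d) * ((b*e) * (S f * S c))`, linear in `a, b, c`. -/
def PsiX (d e f : H) : H ⊗[k] (H ⊗[k] H) →ₗ[k] H :=
  LinearMap.mul' k H ∘ₗ TensorProduct.map
    ((S : H →ₗ[k] H) ∘ₗ LinearMap.mulRight k d)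
    (LinearMap.mul' k H ∘ₗ TensorProduct.map (LinearMap.mulRight k e)
      (LinearMap.mulLeft k (S f) ∘ₗ (S : H →ₗ[k] H)))

@[simp] lemma PsiX_apply (d e f a b c : H) :
    PsiX d e f (a ⊗ₜ[k] (b ⊗ₜ[k] c)) = S (a * d) * ((b * e) * (S f * S c)) := by
  simp [PsiX]

/-- `d ⊗ (e ⊗ f) ↦ S(a*d) * ((b*e) * (S f * S c))`, linear in `d, e, f`. -/
def PsiY (a b c : H) : H ⊗[k] (H ⊗[k] H) →ₗ[k] H :=
  LinearMap.mul' k H ∘ₗ TensorProduct.map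
    ((S : H →ₗ[k] H) ∘ₗ LinearMap.mulLeft k a)
    (LinearMap.mul' k H ∘ₗ TensorProduct.map (LinearMap.mulLeft k b)
      (LinearMap.mulRight k (S c) ∘ₗ (S : H →ₗ[k] H)))

@[simp] lemma PsiY_apply (a b c d e f : H) :
    PsiY a b c (d ⊗ₜ[k] (e ⊗ₜ[k] f)) = S (a * d) * ((b * e) * (S f * S c)) := by
  simp [PsiY]


lemma assoc_sum_packed {T : Type} [AddCommGroup T] [Module k T]
    (Ψ : H ⊗[k] (H ⊗[k] H) →ₗ[k] T) {x : H} {ι : Type} (r : Coalgebra.Repr k x ι)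
    (r1 : ∀ i, Coalgebra.Repr k (r.left i) (H × H)) (r2 : ∀ i, Coalgebra.Repr k (r.right i) (H × H)) :
    ∑ a ∈ r.index.sigma fun i => (r1 i).index,
      Ψ ((r1 a.1).left a.2 ⊗ₜ[k] ((r1 a.1).right a.2 ⊗ₜ[k] r.right a.1))
    = ∑ a ∈ r.index.sigma fun i => (r2 i).index,
      Ψ (r.left a.1 ⊗ₜ[k] ((r2 a.1).left a.2 ⊗ₜ[k] (r2 a.1).right a.2)) := by
  rw [Finset.sum_sigma, Finset.sum_sigma]
  exact assoc_sum Ψ r r1 r2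

theorem antipode_mul' (x y : H) : S (x * y) = S y * S x := by
  classical
  obtain ⟨rx⟩ : Nonempty (Coalgebra.Repr k x (H × H)) := ⟨Coalgebra.Repr.arbitrary k x⟩
  obtain ⟨ry⟩ : Nonempty (Coalgebra.Repr k y (H × H)) := ⟨Coalgebra.Repr.arbitrary k y⟩
  set rx1 : ∀ i, Coalgebra.Repr k (rx.left i) (H × H) := fun i => Coalgebra.Repr.arbitrary k _ with hrx1
  set rx2 : ∀ i, Coalgebra.Repr k (rx.right i) (H × H) := fun i => Coalgebra.Repr.arbitrary k _ with hrx2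
  set ry1 : ∀ j, Coalgebra.Repr k (ry.left j) (H × H) := fun j => Coalgebra.Repr.arbitrary k _ with hry1
  set ry2 : ∀ j, Coalgebra.Repr k (ry.right j) (H × H) := fun j => Coalgebra.Repr.arbitrary k _ with hry2
  -- step 1 : S (x*y) as the big sum in (xB, yB) form
  have c1 : S (x * y) = ∑ a ∈ rx.index.sigma fun i => (rx2 i).index,
      ∑ b ∈ ry.index.sigma fun j => (ry2 j).index,
      S (rx.left a.1 * ry.left b.1) *
        (((rx2 a.1).left a.2 * (ry2 b.1).left b.2) *
          (S ((ry2 b.1).right b.2) * S ((rx2 a.1).right a.2))) := by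
    have e1 : S (x * y) = ∑ i ∈ rx.index, ∑ j ∈ ry.index,
        (ε (rx.right i) * ε (ry.right j)) • S (rx.left i * ry.left j) := by
      conv_lhs => rw [← sum_counit_smul_left rx, ← sum_counit_smul_left ry]
      rw [Finset.sum_mul_sum, map_sum]
      refine Finset.sum_congr rfl fun i _ => ?_
      rw [map_sum]
      refine Finset.sum_congr rfl fun j _ => ?_
      rw [smul_mul_smul_comm, map_smul]
    have e2 : ∀ i ∈ rx.index, ∀ j ∈ ry.index,
        (ε (rx.right i) * ε (ry.right j)) • S (rx.left i * ry.left j)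
        = ∑ p ∈ (rx2 i).index, ∑ l ∈ (ry2 j).index,
            S (rx.left i * ry.left j) *
              (((rx2 i).left p * (ry2 j).left l) *
                (S ((ry2 j).right l) * S ((rx2 i).right p))) := by
      intro i _ j _
      refine Eq.symm ?_
      calc ∑ p ∈ (rx2 i).index, ∑ l ∈ (ry2 j).index,
            S (rx.left i * ry.left j) *
              (((rx2 i).left p * (ry2 j).left l) *
                (S ((ry2 j).right l) * S ((rx2 i).right p)))
          = S (rx.left i * ry.left j) * ∑ p ∈ (rx2 i).index, ∑ l ∈ (ry2 j).index,
              ((rx2 i).left p * (ry2 j).left l) *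
                (S ((ry2 j).right l) * S ((rx2 i).right p)) := by
            simp only [← Finset.mul_sum]
        _ = _ := by rw [K2 (rx2 i) (ry2 j), mul_smul_comm, mul_one]
    calc S (x * y) = ∑ i ∈ rx.index, ∑ j ∈ ry.index,
          (ε (rx.right i) * ε (ry.right j)) • S (rx.left i * ry.left j) := e1
      _ = ∑ i ∈ rx.index, ∑ j ∈ ry.index, ∑ p ∈ (rx2 i).index, ∑ l ∈ (ry2 j).index,
            S (rx.left i * ry.left j) *
              (((rx2 i).left p * (ry2 j).left l) *
                (S ((ry2 j).right l) * S ((rx2 i).right p))) :=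
          Finset.sum_congr rfl fun i hi => Finset.sum_congr rfl fun j hj => e2 i hi j hj
      _ = ∑ i ∈ rx.index, ∑ p ∈ (rx2 i).index, ∑ j ∈ ry.index, ∑ l ∈ (ry2 j).index,
            S (rx.left i * ry.left j) *
              (((rx2 i).left p * (ry2 j).left l) *
                (S ((ry2 j).right l) * S ((rx2 i).right p))) :=
          Finset.sum_congr rfl fun i _ => Finset.sum_comm
      _ = _ := by
          rw [Finset.sum_sigma']
          exact Finset.sum_congr rfl fun a _ => by rw [Finset.sum_sigma']
  have c2 : (∑ a ∈ rx.index.sigma fun i => (rx2 i).index,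
      ∑ b ∈ ry.index.sigma fun j => (ry2 j).index,
      S (rx.left a.1 * ry.left b.1) *
        (((rx2 a.1).left a.2 * (ry2 b.1).left b.2) *
          (S ((ry2 b.1).right b.2) * S ((rx2 a.1).right a.2))))
      = ∑ a ∈ rx.index.sigma fun i => (rx1 i).index,
        ∑ b ∈ ry.index.sigma fun j => (ry2 j).index,
        S ((rx1 a.1).left a.2 * ry.left b.1) *
          (((rx1 a.1).right a.2 * (ry2 b.1).left b.2) *
            (S ((ry2 b.1).right b.2) * S (rx.right a.1))) := by
    rw [Finset.sum_comm]
    conv_rhs => rw [Finset.sum_comm]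
    refine Finset.sum_congr rfl fun b _ => ?_
    have := (assoc_sum_packed
      (PsiX (ry.left b.1) ((ry2 b.1).left b.2) ((ry2 b.1).right b.2)) rx rx1 rx2).symm
    simpa using this
  have c3 : (∑ a ∈ rx.index.sigma fun i => (rx1 i).index,
      ∑ b ∈ ry.index.sigma fun j => (ry2 j).index,
      S ((rx1 a.1).left a.2 * ry.left b.1) *
        (((rx1 a.1).right a.2 * (ry2 b.1).left b.2) *
          (S ((ry2 b.1).right b.2) * S (rx.right a.1))))
      = ∑ a ∈ rx.index.sigma fun i => (rx1 i).index,
        ∑ b ∈ ry.index.sigma fun j => (ry1 j).index,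
        S ((rx1 a.1).left a.2 * (ry1 b.1).left b.2) *
          (((rx1 a.1).right a.2 * (ry1 b.1).right b.2) *
            (S (ry.right b.1) * S (rx.right a.1))) := by
    refine Finset.sum_congr rfl fun a _ => ?_
    have := (assoc_sum_packed
      (PsiY ((rx1 a.1).left a.2) ((rx1 a.1).right a.2) (rx.right a.1)) ry ry1 ry2)
    simpa using this.symm
  have c4 : (∑ a ∈ rx.index.sigma fun i => (rx1 i).index,
      ∑ b ∈ ry.index.sigma fun j => (ry1 j).index,
      S ((rx1 a.1).left a.2 * (ry1 b.1).left b.2) *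
        (((rx1 a.1).right a.2 * (ry1 b.1).right b.2) *
          (S (ry.right b.1) * S (rx.right a.1))))
      = S y * S x := by
    have hSx : S x = ∑ i ∈ rx.index, ε (rx.left i) • S (rx.right i) := by
      conv_lhs => rw [← sum_counit_smul_right rx]
      rw [map_sum]
      exact Finset.sum_congr rfl fun i _ => map_smul _ _ _
    have hSy : S y = ∑ j ∈ ry.index, ε (ry.left j) • S (ry.right j) := by
      conv_lhs => rw [← sum_counit_smul_right ry]
      rw [map_sum]
      exact Finset.sum_congr rfl fun j _ => map_smul _ _ _
    simp only [Finset.sum_sigma]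
    calc (∑ i ∈ rx.index, ∑ p ∈ (rx1 i).index, ∑ j ∈ ry.index, ∑ l ∈ (ry1 j).index,
          S ((rx1 i).left p * (ry1 j).left l) *
            (((rx1 i).right p * (ry1 j).right l) *
              (S (ry.right j) * S (rx.right i))))
        = ∑ i ∈ rx.index, ∑ j ∈ ry.index, ∑ p ∈ (rx1 i).index, ∑ l ∈ (ry1 j).index,
          (S ((rx1 i).left p * (ry1 j).left l) *
            ((rx1 i).right p * (ry1 j).right l)) *
              (S (ry.right j) * S (rx.right i)) := by
          refine (Finset.sum_congr rfl fun i _ => Finset.sum_comm).trans ?_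
          refine Finset.sum_congr rfl fun i _ => Finset.sum_congr rfl fun j _ =>
            Finset.sum_congr rfl fun p _ => Finset.sum_congr rfl fun l _ => ?_
          simp [mul_assoc]
      _ = ∑ i ∈ rx.index, ∑ j ∈ ry.index,
            ((ε (rx.left i) * ε (ry.left j)) • (1 : H)) *
              (S (ry.right j) * S (rx.right i)) := by
          refine Finset.sum_congr rfl fun i _ => Finset.sum_congr rfl fun j _ => ?_
          simp only [← Finset.sum_mul]
          rw [K1 (rx1 i) (ry1 j)]
      _ = ∑ i ∈ rx.index, ∑ j ∈ ry.index,
            (ε (ry.left j) • S (ry.right j)) * (ε (rx.left i) • S (rx.right i)) := by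
          refine Finset.sum_congr rfl fun i _ => Finset.sum_congr rfl fun j _ => ?_
          rw [smul_mul_assoc, one_mul, smul_mul_smul_comm]
          rw [mul_comm (ε (rx.left i)) (ε (ry.left j))]
      _ = S y * S x := by
          rw [hSx, hSy, Finset.sum_mul_sum, Finset.sum_comm]
  rw [c1, c2, c3, c4]

variable (δ : H →ₐ[k] k)

lemma Sdelta_repr {a : H} {ι : Type} (r : Coalgebra.Repr k a ι) :
    Sdelta k δ a = ∑ i ∈ r.index, δ (r.left i) • S (r.right i) := by
  simp only [Sdelta, LinearMap.comp_apply]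
  rw [← r.eq, map_sum, map_sum]
  simp

lemma Sdelta_one : Sdelta k δ 1 = 1 := by
  simp [Sdelta, Bialgebra.comul_one, Algebra.TensorProduct.one_def, antipode_one']

lemma Sdelta_mul (x y : H) : Sdelta k δ (x * y) = Sdelta k δ y * Sdelta k δ x := by
  obtain ⟨rx⟩ : Nonempty (Coalgebra.Repr k x (H × H)) := ⟨Coalgebra.Repr.arbitrary k x⟩
  obtain ⟨ry⟩ : Nonempty (Coalgebra.Repr k y (H × H)) := ⟨Coalgebra.Repr.arbitrary k y⟩
  have h2 : Sdelta k δ (x * y) = ∑ p ∈ rx.index ×ˢ ry.index,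
      δ (rx.left p.1 * ry.left p.2) • S (rx.right p.1 * ry.right p.2) :=
    Sdelta_repr δ (mulRepr rx ry)
  rw [Finset.sum_product] at h2
  rw [h2, Sdelta_repr δ rx, Sdelta_repr δ ry, Finset.sum_mul_sum, Finset.sum_comm]
  refine Finset.sum_congr rfl fun j _ => Finset.sum_congr rfl fun i _ => ?_
  rw [map_mul, antipode_mul', smul_mul_smul_comm, mul_comm (δ (ry.left j)) (δ (rx.left i))]

/-- `a ⊗ (b ⊗ c) ↦ δ(a) • (S b * c)`. -/
def PsiD : H ⊗[k] (H ⊗[k] H) →ₗ[k] H :=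
  (TensorProduct.lid k H).toLinearMap ∘ₗ TensorProduct.map δ.toLinearMap
    (LinearMap.mul' k H ∘ₗ (HopfAlgebra.antipode (R := k)).rTensor H)

@[simp] lemma PsiD_apply (a b c : H) :
    PsiD δ (a ⊗ₜ[k] (b ⊗ₜ[k] c)) = δ a • (S b * c) := by
  simp [PsiD]

lemma Sdelta_conv {h : H} {ι : Type} (r : Coalgebra.Repr k h ι) :
    ∑ i ∈ r.index, Sdelta k δ (r.left i) * r.right i = δ h • (1 : H) := by
  classical
  set r1 : ∀ i, Coalgebra.Repr k (r.left i) (H × H) := fun i => Coalgebra.Repr.arbitrary k _ with hr1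
  set r2 : ∀ i, Coalgebra.Repr k (r.right i) (H × H) := fun i => Coalgebra.Repr.arbitrary k _ with hr2
  calc ∑ i ∈ r.index, Sdelta k δ (r.left i) * r.right i
      = ∑ i ∈ r.index, ∑ j ∈ (r1 i).index,
          PsiD δ ((r1 i).left j ⊗ₜ[k] ((r1 i).right j ⊗ₜ[k] r.right i)) := by
        refine Finset.sum_congr rfl fun i _ => ?_
        rw [Sdelta_repr δ (r1 i), Finset.sum_mul]
        exact Finset.sum_congr rfl fun j _ => by simp [smul_mul_assoc]
    _ = ∑ i ∈ r.index, ∑ j ∈ (r2 i).index,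
          PsiD δ (r.left i ⊗ₜ[k] ((r2 i).left j ⊗ₜ[k] (r2 i).right j)) :=
        assoc_sum (PsiD δ) r r1 r2
    _ = ∑ i ∈ r.index, δ (r.left i) • ((ε (r.right i) : k) • (1 : H)) := by
        refine Finset.sum_congr rfl fun i _ => ?_
        simp only [PsiD_apply]
        rw [← Finset.smul_sum, sum_antipode_mul_eq_smul (r2 i)]
    _ = δ h • (1 : H) := by
        have hh : ∑ i ∈ r.index, ε (r.right i) • δ (r.left i) = δ h := by
          have := congrArg δ (sum_counit_smul_left r)
          rw [map_sum] at this
          simpa [map_smul] using this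
        rw [← hh, Finset.sum_smul]
        refine Finset.sum_congr rfl fun i _ => ?_
        rw [smul_smul, smul_eq_mul, mul_comm]
  
lemma Sdelta_sq_conv (σ : H) {h : H} {ι : Type} (r : Coalgebra.Repr k h ι) :
    ∑ i ∈ r.index, Sdelta k δ (r.right i) * (Sdelta k δ (Sdelta k δ (r.left i)) * σ)
      = δ h • σ := by
  have e : ∀ i, Sdelta k δ (r.right i) * (Sdelta k δ (Sdelta k δ (r.left i)) * σ)
      = Sdelta k δ (Sdelta k δ (r.left i) * r.right i) * σ := by
    intro i; rw [Sdelta_mul, mul_assoc]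
  simp only [e]
  rw [← Finset.sum_mul, ← map_sum, Sdelta_conv δ r, map_smul, Sdelta_one, smul_mul_assoc,
    one_mul]


end AuxHopf

section AuxCwrap
variable {k}

section AuxC
open Coalgebra HopfAlgebra

variable {H : Type} [Ring H] [HopfAlgebra k H]

local notation "S" => HopfAlgebra.antipode (R := k) (A := H)

/-- the map `h ↦ S_δ(h⁽²⁾) * f(h⁽¹⁾)`. -/
def qmap (δ : H →ₐ[k] k) (f : H →ₗ[k] H) : H →ₗ[k] H :=
  LinearMap.mul' k H ∘ₗ TensorProduct.map (Sdelta k δ) f ∘ₗ cmm k H H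
    ∘ₗ (Coalgebra.comul (R := k) (A := H))

lemma qmap_repr (δ : H →ₐ[k] k) (f : H →ₗ[k] H) {h : H} {ι : Type} (r : Coalgebra.Repr k h ι) :
    qmap δ f h = ∑ i ∈ r.index, Sdelta k δ (r.right i) * f (r.left i) := by
  simp only [qmap, LinearMap.comp_apply]
  rw [← r.eq, map_sum, map_sum, map_sum]
  simp

lemma qmap_sq (δ : H →ₐ[k] k) (σ : H) :
    qmap δ (LinearMap.mulRight k σ ∘ₗ Sdelta k δ ∘ₗ Sdelta k δ)
      = LinearMap.toSpanSingleton k H σ ∘ₗ δ.toLinearMap := by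
  refine LinearMap.ext fun h => ?_
  obtain ⟨r⟩ : Nonempty (Coalgebra.Repr k h (H × H)) := ⟨Coalgebra.Repr.arbitrary k h⟩
  rw [qmap_repr δ _ r]
  simp only [LinearMap.comp_apply, LinearMap.mulRight_apply]
  rw [Sdelta_sq_conv δ σ r]
  simp

variable {C : Type} [AddCommGroup C] [Module k C]

/-- `(c ⊗ a) ⊗ b ↦ c ⊗ (S_δ(b) * a)`. -/
def Rmap (δ : H →ₐ[k] k) : (C ⊗[k] H) ⊗[k] H →ₗ[k] C ⊗[k] H :=
  ((LinearMap.mul' k H ∘ₗ cmm k H H).lTensor C) ∘ₗ asc k C H H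
    ∘ₗ ((Sdelta k δ).lTensor (C ⊗[k] H))

lemma qmap_factor [Coalgebra k C] (δ : H →ₐ[k] k) (ρC : C →ₗ[k] C ⊗[k] H)
    (hco : IsCoassocR k ρC) (f g : H →ₗ[k] H)
    (hfg : (f.lTensor C) ∘ₗ ρC = (g.lTensor C) ∘ₗ ρC) :
    ((qmap δ f).lTensor C) ∘ₗ ρC = ((qmap δ g).lTensor C) ∘ₗ ρC := by
  have hco' : ρC.rTensor H ∘ₗ ρC
      = ascs k C H H ∘ₗ ((Coalgebra.comul (R := k) (A := H)).lTensor C) ∘ₗ ρC := hco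
  have hsplit : ∀ f' : H →ₗ[k] H, (qmap δ f').lTensor C
      = Rmap δ ∘ₗ ((f'.lTensor C).rTensor H) ∘ₗ ascs k C H H
          ∘ₗ ((Coalgebra.comul (R := k) (A := H)).lTensor C) := by
    intro f'
    refine TensorProduct.ext' fun c h => ?_
    simp only [LinearMap.lTensor_tmul, LinearMap.comp_apply, qmap]
    generalize (Coalgebra.comul (R := k) (A := H)) h = t
    induction t using TensorProduct.induction_on with
    | zero => simp
    | add u v hu hv => simp only [map_add, TensorProduct.tmul_add, hu, hv]
    | tmul a b => simp [Rmap]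
  refine LinearMap.ext fun z => ?_
  have e1 := LinearMap.congr_fun (hsplit f) (ρC z)
  have e2 := LinearMap.congr_fun (hsplit g) (ρC z)
  have e3 := LinearMap.congr_fun hco' z
  have e4 := LinearMap.congr_fun (congrArg (fun m => LinearMap.rTensor H m) hfg) (ρC z)
  simp only [LinearMap.comp_apply] at e1 e2 e3 e4 ⊢
  rw [← e3] at e1 e2
  simp only [LinearMap.rTensor_comp, LinearMap.comp_apply] at e4
  rw [e1, e2, e4]

lemma mulLeft_coact [Coalgebra k C] (δ : H →ₐ[k] k) (σ σ' : H) (hinv' : σ' * σ = 1)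
    (ρC : C →ₗ[k] C ⊗[k] H)
    (hinvolution : ((Sdelta k δ ∘ₗ Sdelta k δ).lTensor C) ∘ₗ ρC
      = ((LinearMap.mulRight k σ' ∘ₗ LinearMap.mulLeft k σ).lTensor C) ∘ₗ ρC) :
    ((LinearMap.mulLeft k σ).lTensor C) ∘ₗ ρC
      = ((LinearMap.mulRight k σ ∘ₗ Sdelta k δ ∘ₗ Sdelta k δ).lTensor C) ∘ₗ ρC := by
  have h1 := congrArg (fun (m : C →ₗ[k] C ⊗[k] H) =>
    ((LinearMap.mulRight k σ).lTensor C) ∘ₗ m) hinvolution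
  simp only [← LinearMap.comp_assoc, ← LinearMap.lTensor_comp] at h1
  have h2 : ((LinearMap.mulRight k σ) ∘ₗ LinearMap.mulRight k σ') ∘ₗ LinearMap.mulLeft k σ
      = LinearMap.mulLeft k σ := by
    refine LinearMap.ext fun h => ?_
    simp [mul_assoc, hinv']
  rw [h2] at h1
  simp only [← LinearMap.comp_assoc]
  exact h1.symm

lemma coact_factor (ρC : C →ₗ[k] C ⊗[k] H) :
    asc k C H k ∘ₗ (ρC.rTensor k)
      = ((TensorProduct.rid k H).symm.toLinearMap.lTensor C) ∘ₗ ρC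
          ∘ₗ (TensorProduct.rid k C).toLinearMap := by
  refine TensorProduct.ext' fun c x => ?_
  simp only [LinearMap.comp_apply, LinearMap.rTensor_tmul, LinearEquiv.coe_coe,
    TensorProduct.rid_tmul, map_smul]
  generalize ρC c = d
  induction d using TensorProduct.induction_on with
  | zero => simp
  | add u v hu hv => simp only [map_add, TensorProduct.add_tmul, smul_add, hu, hv]
  | tmul c' h =>
      simp only [LinearMap.lTensor_tmul, LinearEquiv.coe_coe, TensorProduct.assoc_tmul,
        TensorProduct.rid_symm_apply, ← TensorProduct.tmul_smul, smul_eq_mul, mul_one]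

lemma F1_factor (δ : H →ₐ[k] k) (σ : H) :
    (coactGrouplike k σ ∘ₗ actChar k δ ∘ₗ cmm k H k)
        ∘ₗ (TensorProduct.rid k H).symm.toLinearMap
      = (TensorProduct.rid k H).symm.toLinearMap
          ∘ₗ (LinearMap.toSpanSingleton k H σ ∘ₗ δ.toLinearMap) := by
  refine LinearMap.ext fun h => ?_
  simp [actChar, coactGrouplike, TensorProduct.rid_symm_apply, TensorProduct.smul_tmul,
    TensorProduct.smul_tmul']

lemma Twist_char_apply (δ : H →ₐ[k] k) (h g : H) (x : k) {ι : Type} (r : Coalgebra.Repr k h ι)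
    (ri : ∀ i, Coalgebra.Repr k (r.right i) (H × H)) :
    Twist k (LinearMap.mul' k H) (Coalgebra.comul (R := k)) (HopfAlgebra.antipode (R := k))
        (actChar k δ) (h ⊗ₜ[k] (g ⊗ₜ[k] x))
      = ∑ i ∈ r.index, ∑ j ∈ (ri i).index,
          (S ((ri i).right j) * (g * r.left i)) ⊗ₜ[k] (δ ((ri i).left j) * x) := by
  have hst : (LinearMap.lTensor H (Coalgebra.comul (R := k) (A := H)))
      ((Coalgebra.comul (R := k) (A := H)) h)
      = ∑ i ∈ r.index, ∑ j ∈ (ri i).index,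
          r.left i ⊗ₜ[k] ((ri i).left j ⊗ₜ[k] (ri i).right j) := by
    rw [← r.eq, map_sum]
    refine Finset.sum_congr rfl fun i _ => ?_
    rw [LinearMap.lTensor_tmul, ← (ri i).eq, TensorProduct.tmul_sum]
  simp only [Twist, LinearMap.comp_apply, LinearMap.rTensor_tmul]
  rw [hst]
  simp only [TensorProduct.sum_tmul, map_sum]
  refine Finset.sum_congr rfl fun i _ => Finset.sum_congr rfl fun j _ => ?_
  simp [opMul, actChar, mul_comm]

lemma F2_factor (δ : H →ₐ[k] k) (σ : H) :
    (Twist k (LinearMap.mul' k H) (Coalgebra.comul (R := k)) (HopfAlgebra.antipode (R := k))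
        (actChar k δ) ∘ₗ ((coactGrouplike k σ).lTensor H))
        ∘ₗ (TensorProduct.rid k H).symm.toLinearMap
      = (TensorProduct.rid k H).symm.toLinearMap ∘ₗ qmap δ (LinearMap.mulLeft k σ) := by
  classical
  refine LinearMap.ext fun h => ?_
  obtain ⟨r⟩ : Nonempty (Coalgebra.Repr k h (H × H)) := ⟨Coalgebra.Repr.arbitrary k h⟩
  set ri : ∀ i, Coalgebra.Repr k (r.right i) (H × H) := fun i => Coalgebra.Repr.arbitrary k _ with hri
  have hL : ((coactGrouplike k σ).lTensor H) ((TensorProduct.rid k H).symm.toLinearMap h)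
      = h ⊗ₜ[k] (σ ⊗ₜ[k] (1 : k)) := by
    simp [coactGrouplike, TensorProduct.rid_symm_apply]
  simp only [LinearMap.comp_apply]
  rw [hL, Twist_char_apply δ h σ 1 r ri, qmap_repr δ _ r, map_sum]
  refine Finset.sum_congr rfl fun i _ => ?_
  rw [Sdelta_repr δ (ri i), Finset.sum_mul, map_sum]
  refine Finset.sum_congr rfl fun j _ => ?_
  simp only [LinearMap.mulLeft_apply, smul_mul_assoc, map_smul, LinearEquiv.coe_coe,
    TensorProduct.rid_symm_apply]
  rw [← TensorProduct.tmul_smul, smul_eq_mul, mul_one]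

lemma stab_gen (δ : H →ₐ[k] k) (σ : H) (hmod : δ σ = 1)
    {V : Type} [AddCommGroup V] [Module k V] (ρV : V →ₗ[k] V ⊗[k] H)
    (x : V ⊗[k] k) (hx : x ∈ LinearMap.ker (cotensorDefect k ρV (coactGrouplike k σ))) :
    stabMapC k ρV (actChar k δ) x = x := by
  have h0 : (asc k V H k) ((ρV.rTensor k) x) = ((coactGrouplike k σ).lTensor V) x := by
    have hx' : cotensorDefect k ρV (coactGrouplike k σ) x = 0 := hx
    rw [cotensorDefect, LinearMap.sub_apply, sub_eq_zero] at hx'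
    simpa using hx'
  have h1 : (actChar k δ ∘ₗ cmm k H k) ∘ₗ coactGrouplike k σ = LinearMap.id := by
    refine LinearMap.ext_ring ?_
    simp [actChar, coactGrouplike, hmod]
  calc stabMapC k ρV (actChar k δ) x
      = ((actChar k δ ∘ₗ cmm k H k).lTensor V) ((asc k V H k) ((ρV.rTensor k) x)) := rfl
    _ = ((actChar k δ ∘ₗ cmm k H k).lTensor V) (((coactGrouplike k σ).lTensor V) x) := by
        rw [h0]
    _ = (((actChar k δ ∘ₗ cmm k H k) ∘ₗ coactGrouplike k σ).lTensor V) x := by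
        simp only [LinearMap.lTensor_comp, LinearMap.comp_apply]
    _ = x := by rw [h1, LinearMap.lTensor_id, LinearMap.id_apply]

end AuxC

end AuxCwrap

/-- If `(δ, σ)` is a modular pair in `H^C`-involution for the right
`H`-comodule coalgebra `C`, then `^σ k_δ` is an `H^C`-SAYD module. -/
theorem stmt10 (k H C : Type) [Field k] [Ring H] [HopfAlgebra k H]
    [AddCommGroup C] [Module k C] [Coalgebra k C]
    (ρC : C →ₗ[k] C ⊗[k] H) (hC : IsComodCoalgR k ρC)
    (δ : H →ₐ[k] k) (σ σ' : H) (hσ : IsGrouplike k σ)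
    (hinv : σ * σ' = 1) (hinv' : σ' * σ = 1)
    (hmodular : δ σ = 1)
    (hinvolution : ((Sdelta k δ ∘ₗ Sdelta k δ).lTensor C) ∘ₗ ρC
      = ((LinearMap.mulRight k σ' ∘ₗ LinearMap.mulLeft k σ).lTensor C) ∘ₗ ρC) :
    IsHCSAYD k ρC (coactGrouplike k σ) (actChar k δ) := by
  obtain ⟨hcoassoc, -, -, -⟩ := hC
  constructor
  · -- the `H^C`-AYD condition
    unfold AYDcondC
    rw [coact_factor ρC]
    have key : ((qmap δ (LinearMap.mulLeft k σ)).lTensor C) ∘ₗ ρC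
        = ((LinearMap.toSpanSingleton k H σ ∘ₗ δ.toLinearMap).lTensor C) ∘ₗ ρC := by
      rw [qmap_factor δ ρC hcoassoc _ _ (mulLeft_coact δ σ σ' hinv' ρC hinvolution),
        qmap_sq δ σ]
    have e : ∀ (F : H ⊗[k] k →ₗ[k] H ⊗[k] k) (q : H →ₗ[k] H),
        (F ∘ₗ (TensorProduct.rid k H).symm.toLinearMap
          = (TensorProduct.rid k H).symm.toLinearMap ∘ₗ q) → ∀ w : C ⊗[k] H,
        (F.lTensor C) (((TensorProduct.rid k H).symm.toLinearMap.lTensor C) w)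
          = ((TensorProduct.rid k H).symm.toLinearMap.lTensor C) ((q.lTensor C) w) := by
      intro F q hF w
      have h2 := LinearMap.congr_fun (congrArg (fun m => LinearMap.lTensor C m) hF) w
      simpa only [LinearMap.lTensor_comp, LinearMap.comp_apply] using h2
    refine LinearMap.ext fun z => ?_
    simp only [LinearMap.comp_apply]
    rw [e _ _ (F1_factor δ σ), e _ _ (F2_factor δ σ)]
    have hkey := LinearMap.congr_fun key ((TensorProduct.rid k C).toLinearMap z)
    simp only [LinearMap.comp_apply] at hkey
    rw [hkey]
  · intro n x hx
    exact stab_gen δ σ hmodular _ x hx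

end HCN
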